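/- arXiv:2407.02021 — 10 statements merged into one kernel-verified Lean document; each statement's English description precedes it below -/
import Mathlib

section
/- Let R be an LG-ring, let n ≥ 1, and let I ⊆ R[X₁,…,Xₙ] be an ideal generated by finitely many polynomials f₁,…,f_d. (a) For every point u = (u₁,…,uₙ) ∈ Rⁿ, if for every maximal ideal 𝔪 of R there is some i with fᵢ(u) ∉ 𝔪 (equivalently, the ideal of R generated by f₁(u),…,f_d(u) is all of R), then there exists f ∈ I with f(u) ∈ R^×; moreover such an f can be chosen of the form f = a₁f₁ + ⋯ + a_df_d with a₁,…,a_d ∈ R. (b) If for every maximal ideal 𝔪 of R there exists a point v ∈ (R/𝔪)ⁿ such that fᵢ(v) ≠ 0 in R/𝔪 for some i, then there exist u ∈ Rⁿ and a₁,…,a_d ∈ R such that a₁f₁(u) + ⋯ + a_df_d(u) ∈ R^×. -/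
open MvPolynomial

/-- A commutative ring `R` is an LG-ring ("local-global ring") if every multivariate
polynomial over `R` that represents a unit over every residue field `R/𝔪` at a maximal
ideal `𝔪` already represents a unit over `R`. -/
def IsLGRing (R : Type*) [CommRing R] : Prop :=
  ∀ n : ℕ, 1 ≤ n → ∀ f : MvPolynomial (Fin n) R,
    (∀ 𝔪 : Ideal R, 𝔪.IsMaximal →
      ∃ v : Fin n → R ⧸ 𝔪, IsUnit (MvPolynomial.eval v
        (MvPolynomial.map (Ideal.Quotient.mk 𝔪) f))) →
    ∃ u : Fin n → R, IsUnit (MvPolynomial.eval u f)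

/-- Let `R` be an LG-ring, `n ≥ 1`, and let `I` be the ideal of
`R[X₁,…,Xₙ]` generated by the polynomials `f 0, …, f (d-1)`.

(a) For any `u ∈ Rⁿ`, if for every maximal ideal `𝔪` some `fᵢ(u) ∉ 𝔪`, then there is a
polynomial `g ∈ I` with `g(u) ∈ R^×`, which moreover can be chosen of the form
`g = Σᵢ aᵢ·fᵢ` with `aᵢ ∈ R`.

(b) If for every maximal ideal `𝔪` there is a point `v ∈ (R/𝔪)ⁿ` with `fᵢ(v) ≠ 0` in
`R/𝔪` for some `i`, then there are `u ∈ Rⁿ` and `a₁,…,a_d ∈ R` with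
`Σᵢ aᵢ·fᵢ(u) ∈ R^×`. -/
theorem lg_ring_represents_unit {R : Type*} [CommRing R] (hR : IsLGRing R)
    (n : ℕ) (hn : 1 ≤ n) (d : ℕ) (f : Fin d → MvPolynomial (Fin n) R) :
    -- (a)
    ((∀ u : Fin n → R,
        (∀ 𝔪 : Ideal R, 𝔪.IsMaximal → ∃ i, MvPolynomial.eval u (f i) ∉ 𝔪) →
        ∃ g ∈ Ideal.span (Set.range f),
          IsUnit (MvPolynomial.eval u g) ∧
          ∃ a : Fin d → R, g = ∑ i, MvPolynomial.C (a i) * f i)) ∧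
    -- (b)
    ((∀ 𝔪 : Ideal R, 𝔪.IsMaximal →
        ∃ v : Fin n → R ⧸ 𝔪, ∃ i,
          MvPolynomial.eval v (MvPolynomial.map (Ideal.Quotient.mk 𝔪) (f i)) ≠ 0) →
      ∃ u : Fin n → R, ∃ a : Fin d → R,
        IsUnit (∑ i, a i * MvPolynomial.eval u (f i))) := by

  constructor
  · -- (a)
    intro u hu
    have htop : Ideal.span (Set.range fun i => MvPolynomial.eval u (f i)) = ⊤ := by
      by_contra h
      obtain ⟨𝔪, h𝔪, hle⟩ := Ideal.exists_le_maximal _ h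
      obtain ⟨i, hi⟩ := hu 𝔪 h𝔪
      exact hi (hle (Ideal.subset_span ⟨i, rfl⟩))
    have h1 : (1 : R) ∈ Ideal.span (Set.range fun i => MvPolynomial.eval u (f i)) := by
      rw [htop]; trivial
    obtain ⟨a, ha⟩ := (Submodule.mem_span_range_iff_exists_fun R).mp h1
    refine ⟨∑ i, MvPolynomial.C (a i) * f i, ?_, ?_, a, rfl⟩
    · exact Ideal.sum_mem _ fun i _ =>
        Ideal.mul_mem_left _ _ (Ideal.subset_span ⟨i, rfl⟩)
    · have : MvPolynomial.eval u (∑ i, MvPolynomial.C (a i) * f i) = 1 := by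
        simp only [map_sum, map_mul, MvPolynomial.eval_C]
        simpa [smul_eq_mul] using ha
      rw [this]; exact isUnit_one
  · -- (b)
    intro hb
    set e := finSumFinEquiv (m := n) (n := d) with he
    set F : MvPolynomial (Fin (n + d)) R :=
      ∑ i, MvPolynomial.X (e (Sum.inr i)) *
        MvPolynomial.rename (fun j => e (Sum.inl j)) (f i) with hF
    have key : ∀ (S : Type _) [CommRing S] (q : R →+* S) (w : Fin (n + d) → S),
        MvPolynomial.eval w (MvPolynomial.map q F) =
          ∑ i, w (e (Sum.inr i)) *
            MvPolynomial.eval (fun j => w (e (Sum.inl j))) (MvPolynomial.map q (f i)) := by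
      intro S _ q w
      rw [hF, map_sum, map_sum]
      refine Finset.sum_congr rfl fun i _ => ?_
      rw [map_mul, MvPolynomial.map_X, MvPolynomial.map_rename, map_mul,
        MvPolynomial.eval_X, MvPolynomial.eval_rename]
      rfl
    have hun : ∃ w : Fin (n + d) → R, IsUnit (MvPolynomial.eval w F) := by
      apply hR (n + d) (le_trans hn (Nat.le_add_right n d)) F
      intro 𝔪 h𝔪
      obtain ⟨v, i0, hv⟩ := hb 𝔪 h𝔪
      haveI := h𝔪
      set c := MvPolynomial.eval v (MvPolynomial.map (Ideal.Quotient.mk 𝔪) (f i0)) with hc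
      obtain ⟨b, hbinv⟩ := Ideal.Quotient.exists_inv (I := 𝔪) hv
      refine ⟨Sum.elim v (fun i => if i = i0 then b else 0) ∘ e.symm, ?_⟩
      rw [key]
      have hcoord : ∀ x : Fin n ⊕ Fin d,
          (Sum.elim v (fun i => if i = i0 then b else 0) ∘ e.symm) (e x) =
            Sum.elim v (fun i => if i = i0 then b else 0) x := by
        intro x; simp
      have : (∑ i, (Sum.elim v (fun i => if i = i0 then b else 0) ∘ e.symm) (e (Sum.inr i)) *
          MvPolynomial.eval
            (fun j => (Sum.elim v (fun i => if i = i0 then b else 0) ∘ e.symm) (e (Sum.inl j)))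
            (MvPolynomial.map (Ideal.Quotient.mk 𝔪) (f i))) = 1 := by
        simp only [hcoord, Sum.elim_inr, Sum.elim_inl]
        rw [Finset.sum_eq_single i0]
        · simp only [if_pos rfl]
          rw [mul_comm]; exact hbinv
        · intro b _ hb'; simp [hb']
        · intro h; exact absurd (Finset.mem_univ i0) h
      rw [this]; exact isUnit_one
    obtain ⟨w, hw⟩ := hun
    refine ⟨fun j => w (e (Sum.inl j)), fun i => w (e (Sum.inr i)), ?_⟩
    have := key R (RingHom.id R) w
    rw [MvPolynomial.map_id] at this
    rw [this] at hw
    simpa using hw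
end

section
/- Let R be an LG-ring, let n ≥ 1, and let U be an open subscheme of affine n-space 𝔸ⁿ_R = Spec R[X₁,…,Xₙ] which is quasi-compact. Then U has an R-point (a morphism Spec R → U over Spec R) if and only if for every maximal ideal 𝔪 of R the scheme U has an (R/𝔪)-point (a morphism Spec(R/𝔪) → U over Spec R). -/
open AlgebraicGeometry CategoryTheory

universe u

/-- Let `R` be an LG-ring, `n ≥ 1`, and let `U` be a quasi-compact open
subscheme of affine `n`-space `𝔸ⁿ_R = Spec R[X₁,…,Xₙ]`.  Then `U` has an `R`-point over
`Spec R` if and only if for every maximal ideal `𝔪` of `R` it has an `(R/𝔪)`-point over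
`Spec R`. -/
theorem lg_ring_qc_open_of_affine_space_has_point_iff
    {R : Type u} [CommRing R] (hR : IsLGRing R) (n : ℕ) (hn : 1 ≤ n)
    (U : (Spec (CommRingCat.of (MvPolynomial (Fin n) R))).Opens)
    (hU : IsCompact (U : Set (Spec (CommRingCat.of (MvPolynomial (Fin n) R))))) :
    (∃ s : Spec (CommRingCat.of R) ⟶ U.toScheme,
        s ≫ U.ι ≫ Spec.map (CommRingCat.ofHom (algebraMap R (MvPolynomial (Fin n) R))) =
          𝟙 (Spec (CommRingCat.of R))) ↔
    (∀ 𝔪 : Ideal R, 𝔪.IsMaximal →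
      ∃ s : Spec (CommRingCat.of (R ⧸ 𝔪)) ⟶ U.toScheme,
        s ≫ U.ι ≫ Spec.map (CommRingCat.ofHom (algebraMap R (MvPolynomial (Fin n) R))) =
          Spec.map (CommRingCat.ofHom (Ideal.Quotient.mk 𝔪))) := by
  classical
  constructor
  · rintro ⟨s, hs⟩ 𝔪 h𝔪
    refine ⟨Spec.map (CommRingCat.ofHom (Ideal.Quotient.mk 𝔪)) ≫ s, ?_⟩
    rw [Category.assoc, hs, Category.comp_id]
  · intro h
    obtain ⟨t, ht⟩ := PrimeSpectrum.isCompact_isOpen_iff.mp ⟨hU, U.isOpen⟩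
    set A := MvPolynomial (Fin n) R with hA
    set k := t.card with hk
    set f : Fin k → A := fun i => (t.equivFin.symm i).1 with hf
    have hft : ∀ i, f i ∈ t := fun i => (t.equivFin.symm i).2
    set g : MvPolynomial (Fin (n + k)) R :=
      ∑ i : Fin k, MvPolynomial.X (Fin.natAdd n i) *
        MvPolynomial.rename (Fin.castAdd k) (f i) with hg
    -- premise of LG
    have hprem : ∀ 𝔪 : Ideal R, 𝔪.IsMaximal →
        ∃ v : Fin (n + k) → R ⧸ 𝔪, IsUnit (MvPolynomial.eval v
          (MvPolynomial.map (Ideal.Quotient.mk 𝔪) g)) := by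
      intro 𝔪 h𝔪
      have hfield : IsField (R ⧸ 𝔪) := (Ideal.Quotient.maximal_ideal_iff_isField_quotient 𝔪).mp h𝔪
      obtain ⟨s, hs⟩ := h 𝔪 h𝔪
      set Ψ : CommRingCat.of A ⟶ CommRingCat.of (R ⧸ 𝔪) := Spec.preimage (s ≫ U.ι) with hΨ
      let ψ : A →+* R ⧸ 𝔪 := Ψ.hom
      have hfac : s ≫ U.ι = Spec.map Ψ := (Spec.map_preimage _).symm
      have hcomm : CommRingCat.ofHom (algebraMap R A) ≫ Ψ =
          CommRingCat.ofHom (Ideal.Quotient.mk 𝔪) := by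
        apply Spec.map_injective
        rw [Spec.map_comp, ← hfac]
        exact hs
      have hcomm' : ∀ r : R, ψ (algebraMap R A r) = Ideal.Quotient.mk 𝔪 r := by
        intro r
        exact RingHom.congr_fun (show ψ.comp (algebraMap R A) = Ideal.Quotient.mk 𝔪 from congrArg CommRingCat.Hom.hom hcomm) r
      set b : Fin n → R ⧸ 𝔪 := fun j => ψ (MvPolynomial.X j) with hb
      have hkey : ∀ q : A, ψ q =
          MvPolynomial.eval b (MvPolynomial.map (Ideal.Quotient.mk 𝔪) q) := by
        intro q
        have heq : ψ = (MvPolynomial.eval b).comp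
            (MvPolynomial.map (Ideal.Quotient.mk 𝔪) :
              MvPolynomial (Fin n) R →+* MvPolynomial (Fin n) (R ⧸ 𝔪)) := by
          apply MvPolynomial.ringHom_ext
          · intro r
            simp only [RingHom.coe_comp, Function.comp_apply, MvPolynomial.map_C, MvPolynomial.eval_C]
            exact hcomm' r
          · intro j
            simp [hb, ψ]
        exact RingHom.congr_fun heq q
      -- the image of the point of Spec (R ⧸ 𝔪) lies in U
      have hnt : Nontrivial (R ⧸ 𝔪) := hfield.toField.toNontrivial
      obtain ⟨x₀⟩ : Nonempty (PrimeSpectrum (R ⧸ 𝔪)) := inferInstance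
      let x₀' : (Spec (CommRingCat.of (R ⧸ 𝔪))).carrier = PrimeSpectrum (R ⧸ 𝔪) := rfl
      have hmem : (Spec.map Ψ).base x₀ ∈ (U : Set (Spec (CommRingCat.of A))) := by
        rw [← hfac]
        have h1 : (s ≫ U.ι).base x₀ = U.ι.base (s.base x₀) := by
          rfl
        rw [h1, ← Scheme.Opens.range_ι (U := U)]
        exact Set.mem_range_self _
      rw [← ht] at hmem
      have hex : ∃ p ∈ t, p ∉ ((Spec.map Ψ).base x₀).asIdeal := by
        by_contra hcon
        push_neg at hcon
        exact hmem ((PrimeSpectrum.mem_zeroLocus _ _).mpr fun p hp => hcon p hp)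
      obtain ⟨p, hpt, hp⟩ := hex
      have hψp : ψ p ≠ 0 := by
        intro h0
        apply hp
        show ψ p ∈ x₀.asIdeal
        rw [h0]; exact x₀.asIdeal.zero_mem
      obtain ⟨w, hw⟩ := hfield.mul_inv_cancel hψp
      set i : Fin k := t.equivFin ⟨p, hpt⟩ with hi
      have hfi : f i = p := by simp [hf, hi]
      set c : Fin k → R ⧸ 𝔪 := fun i' => if i' = i then w else 0 with hc
      refine ⟨Fin.append b c, ?_⟩
      have hone : MvPolynomial.eval (Fin.append b c)
          (MvPolynomial.map (Ideal.Quotient.mk 𝔪) g) = 1 := by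
        rw [hg, map_sum, map_sum]
        have hterm : ∀ i' : Fin k, MvPolynomial.eval (Fin.append b c)
            (MvPolynomial.map (Ideal.Quotient.mk 𝔪)
              (MvPolynomial.X (Fin.natAdd n i') *
                MvPolynomial.rename (Fin.castAdd k) (f i'))) =
            c i' * ψ (f i') := by
          intro i'
          rw [map_mul, map_mul, MvPolynomial.map_X, MvPolynomial.eval_X,
            Fin.append_right, MvPolynomial.map_rename, MvPolynomial.eval_rename]
          have hcomp : Fin.append b c ∘ Fin.castAdd k = b :=
            funext fun j => Fin.append_left _ _ _
          rw [hcomp, hkey]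
        rw [Finset.sum_congr rfl fun i' _ => hterm i']
        rw [Finset.sum_eq_single i]
        · rw [hc, hfi]; simpa [mul_comm] using hw
        · intro i' _ hne; simp only [hc, if_neg hne, zero_mul]
        · intro hni; exact absurd (Finset.mem_univ i) hni
      rw [hone]; exact isUnit_one
    obtain ⟨u, hu⟩ := hR (n + k) (le_trans hn (Nat.le_add_right n k)) g hprem
    set a : Fin n → R := fun j => u (Fin.castAdd k j) with ha
    have hueval : MvPolynomial.eval u g =
        ∑ i : Fin k, u (Fin.natAdd n i) * MvPolynomial.eval a (f i) := by
      rw [hg, map_sum]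
      refine Finset.sum_congr rfl fun i _ => ?_
      rw [map_mul, MvPolynomial.eval_X, MvPolynomial.eval_rename]
      rfl
    set σ : A →+* R := MvPolynomial.eval a with hσ
    set F : Spec (CommRingCat.of R) ⟶ Spec (CommRingCat.of A) :=
      Spec.map (CommRingCat.ofHom σ) with hF
    have hrange : Set.range F.base ⊆ Set.range U.ι.base := by
      rw [Scheme.Opens.range_ι, ← ht]
      rintro x ⟨q, rfl⟩
      intro hzl
      change (t : Set (MvPolynomial (Fin n) R)) ⊆ PrimeSpectrum.asIdeal (F.base q) at hzl
      have hall : ∀ i : Fin k, MvPolynomial.eval a (f i) ∈ q.asIdeal := by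
        intro i
        exact hzl (hft i)
      have hin : MvPolynomial.eval u g ∈ q.asIdeal := by
        rw [hueval]
        exact Ideal.sum_mem _ fun i _ => q.asIdeal.mul_mem_left _ (hall i)
      exact q.isPrime.ne_top (q.asIdeal.eq_top_of_isUnit_mem hin hu)
    refine ⟨IsOpenImmersion.lift U.ι F hrange, ?_⟩
    rw [← Category.assoc, IsOpenImmersion.lift_fac, hF, ← Spec.map_comp]
    have hid : CommRingCat.ofHom (algebraMap R A) ≫ CommRingCat.ofHom σ =
        𝟙 (CommRingCat.of R) := by
      show CommRingCat.ofHom (σ.comp (algebraMap R A)) = CommRingCat.ofHom (RingHom.id R)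
      congr 1
      ext r
      exact MvPolynomial.eval_C r
    rw [hid, Spec.map_id]
end

section
/- Let R be a commutative ring such that for every n ≥ 1 and every open quasi-compact subscheme U of affine n-space 𝔸ⁿ_R = Spec R[X₁,…,Xₙ], U has an R-point if and only if U has an (R/𝔪)-point for every maximal ideal 𝔪 of R. Then R is an LG-ring. -/
open AlgebraicGeometry CategoryTheory

universe u

section Aux

variable {R : Type u} [CommRing R] {n : ℕ} (f : MvPolynomial (Fin n) R)

/-- If a ring hom inverts `f`, then the corresponding map on spectra lands in `D(f)`. -/
lemma range_specMap_subset_basicOpen {A : Type u} [CommRing A]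
    (ψ : MvPolynomial (Fin n) R →+* A) (hψ : IsUnit (ψ f)) :
    Set.range (Spec.map (CommRingCat.ofHom ψ)).base ⊆
      (PrimeSpectrum.basicOpen f : Set (PrimeSpectrum (MvPolynomial (Fin n) R))) := by
  rintro x ⟨p, rfl⟩
  show f ∉ (PrimeSpectrum.comap ψ p).asIdeal
  intro hf
  have : ψ f ∈ p.asIdeal := hf
  exact p.2.1 (p.asIdeal.eq_top_of_isUnit_mem this hψ)

end Aux

/-- If a commutative ring `R` has the property that every quasi-compact
open subscheme `U` of any affine space `𝔸ⁿ_R` (`n ≥ 1`) has an `R`-point precisely when it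
has an `(R/𝔪)`-point for every maximal ideal `𝔪` of `R`, then `R` is an LG-ring. -/
theorem isLGRing_of_qc_open_of_affine_space_has_point_iff
    {R : Type u} [CommRing R]
    (h : ∀ n : ℕ, 1 ≤ n →
      ∀ U : (Spec (CommRingCat.of (MvPolynomial (Fin n) R))).Opens,
        IsCompact (U : Set (Spec (CommRingCat.of (MvPolynomial (Fin n) R)))) →
        ((∃ s : Spec (CommRingCat.of R) ⟶ U.toScheme,
            s ≫ U.ι ≫ Spec.map (CommRingCat.ofHom (algebraMap R (MvPolynomial (Fin n) R))) =
              𝟙 (Spec (CommRingCat.of R))) ↔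
          (∀ 𝔪 : Ideal R, 𝔪.IsMaximal →
            ∃ s : Spec (CommRingCat.of (R ⧸ 𝔪)) ⟶ U.toScheme,
              s ≫ U.ι ≫ Spec.map (CommRingCat.ofHom (algebraMap R (MvPolynomial (Fin n) R))) =
                Spec.map (CommRingCat.ofHom (Ideal.Quotient.mk 𝔪))))) :
    IsLGRing R := by
  intro n hn f hf
  classical
  let U : (Spec (CommRingCat.of (MvPolynomial (Fin n) R))).Opens := PrimeSpectrum.basicOpen f
  have hU : IsCompact (U : Set (Spec (CommRingCat.of (MvPolynomial (Fin n) R)))) :=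
    PrimeSpectrum.isCompact_basicOpen f
  -- construct an (R/𝔪)-point for each maximal ideal
  have hpts : ∀ 𝔪 : Ideal R, 𝔪.IsMaximal →
      ∃ s : Spec (CommRingCat.of (R ⧸ 𝔪)) ⟶ U.toScheme,
        s ≫ U.ι ≫ Spec.map (CommRingCat.ofHom (algebraMap R (MvPolynomial (Fin n) R))) =
          Spec.map (CommRingCat.ofHom (Ideal.Quotient.mk 𝔪)) := by
    intro 𝔪 h𝔪
    obtain ⟨v, hv⟩ := hf 𝔪 h𝔪
    let ψ : MvPolynomial (Fin n) R →+* R ⧸ 𝔪 :=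
      (MvPolynomial.eval v).comp (MvPolynomial.map (Ideal.Quotient.mk 𝔪))
    have hψf : IsUnit (ψ f) := hv
    have hrange : Set.range (Spec.map (CommRingCat.ofHom ψ)).base ⊆ (U : Set _) :=
      range_specMap_subset_basicOpen f ψ hψf
    refine ⟨IsOpenImmersion.lift U.ι (Spec.map (CommRingCat.ofHom ψ))
      (by rwa [Scheme.Opens.range_ι]), ?_⟩
    rw [← Category.assoc, IsOpenImmersion.lift_fac, ← Spec.map_comp]
    congr 1
    ext r
    simp [ψ, MvPolynomial.algebraMap_eq]
  obtain ⟨s, hs⟩ := (h n hn U hU).mpr hpts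
  -- extract a unit from the R-point
  set g : Spec (CommRingCat.of R) ⟶ Spec (CommRingCat.of (MvPolynomial (Fin n) R)) :=
    s ≫ U.ι with hg
  have hrange : Set.range g.base ⊆ (U : Set _) := by
    rw [hg]
    intro x hx
    obtain ⟨p, rfl⟩ := hx
    have : g.base p = U.ι.base (s.base p) := rfl
    rw [hg] at this
    exact this ▸ (Scheme.Opens.range_ι U ▸ Set.mem_range_self (s.base p) :
      (U.ι.base (s.base p)) ∈ (U : Set _))
  have htri : g ≫ Spec.map (CommRingCat.ofHom (algebraMap R (MvPolynomial (Fin n) R))) =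
      𝟙 (Spec (CommRingCat.of R)) := by rw [hg, Category.assoc]; exact hs
  let φ : CommRingCat.of (MvPolynomial (Fin n) R) ⟶ CommRingCat.of R := Spec.preimage g
  have hφg : Spec.map φ = g := Spec.map_preimage g
  have hφsec : CommRingCat.ofHom (algebraMap R (MvPolynomial (Fin n) R)) ≫ φ
      = 𝟙 (CommRingCat.of R) := by
    apply Spec.map_injective
    rw [Spec.map_comp, Spec.map_id, hφg]
    exact htri
  have hφC : ∀ r : R, φ (MvPolynomial.C r) = r := by
    intro r
    have h1 : (CommRingCat.ofHom (algebraMap R (MvPolynomial (Fin n) R)) ≫ φ) r = r := by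
      rw [hφsec]; rfl
    simpa [MvPolynomial.algebraMap_eq] using h1
  refine ⟨fun i => φ (MvPolynomial.X i), ?_⟩
  have hφeval : (MvPolynomial.eval fun i => φ (MvPolynomial.X i)) f = φ f := by
    have : (MvPolynomial.eval fun i => φ (MvPolynomial.X i)) =
        (ConcreteCategory.hom φ : MvPolynomial (Fin n) R →+* R) := by
      apply MvPolynomial.ringHom_ext
      · intro r; simp [hφC r]
      · intro i; simp
    rw [this]
  rw [hφeval]
  -- φ f is a unit since it lies in no prime ideal
  by_contra hunit
  obtain ⟨𝔪, h𝔪, hmem⟩ : ∃ 𝔪 : Ideal R, 𝔪.IsMaximal ∧ φ f ∈ 𝔪 := by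
    obtain ⟨𝔪, h𝔪, hle⟩ := Ideal.exists_le_maximal (Ideal.span {φ f})
      (fun htop => hunit ((Ideal.span_singleton_eq_top).mp htop))
    exact ⟨𝔪, h𝔪, hle (Ideal.subset_span rfl)⟩
  have hp : (⟨𝔪, h𝔪.isPrime⟩ : PrimeSpectrum R) ∈ Set.univ := trivial
  have := hrange ⟨⟨𝔪, h𝔪.isPrime⟩, rfl⟩
  rw [← hφg] at this
  have hmem' : f ∈ (PrimeSpectrum.comap (ConcreteCategory.hom φ : MvPolynomial (Fin n) R →+* R)
      ⟨𝔪, h𝔪.isPrime⟩).asIdeal := hmem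
  exact ((PrimeSpectrum.mem_basicOpen f _).mp this) hmem'
end

section
/- Let R be an LG-ring all of whose residue fields R/𝔪 (𝔪 a maximal ideal of R) are infinite (equivalently, R satisfies the primitive criterion). Let n ≥ 1 and let U be an open quasi-compact subscheme of affine n-space 𝔸ⁿ_R = Spec R[X₁,…,Xₙ] such that for every maximal ideal 𝔪 of R the fibre U ×_{Spec R} Spec(R/𝔪) is a dense open subset of 𝔸ⁿ_{R/𝔪}. Then U has an R-point. -/
open AlgebraicGeometry CategoryTheory

universe u

/-- Let `R` be an LG-ring all of whose residue fields at maximal ideals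
are infinite (the primitive criterion).  Let `U` be a quasi-compact open subscheme of
`𝔸ⁿ_R = Spec R[X₁,…,Xₙ]` such that for every maximal ideal `𝔪` the fibre of `U` over
`Spec (R/𝔪)` — i.e. the preimage of `U` under `𝔸ⁿ_{R/𝔪} → 𝔸ⁿ_R` — is dense in
`𝔸ⁿ_{R/𝔪}`.  Then `U` has an `R`-point. -/
theorem lg_ring_primitive_dense_qc_open_has_point
    {R : Type u} [CommRing R] (hR : IsLGRing R)
    (hres : ∀ 𝔪 : Ideal R, 𝔪.IsMaximal → Infinite (R ⧸ 𝔪))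
    (n : ℕ) (hn : 1 ≤ n)
    (U : (Spec (CommRingCat.of (MvPolynomial (Fin n) R))).Opens)
    (hU : IsCompact (U : Set (Spec (CommRingCat.of (MvPolynomial (Fin n) R)))))
    (hdense : ∀ 𝔪 : Ideal R, 𝔪.IsMaximal →
      Dense ((Spec.map (CommRingCat.ofHom
          (MvPolynomial.map (σ := Fin n) (Ideal.Quotient.mk 𝔪)))).base ⁻¹'
        (U : Set (Spec (CommRingCat.of (MvPolynomial (Fin n) R)))))) :
    ∃ s : Spec (CommRingCat.of R) ⟶ U.toScheme,
      s ≫ U.ι ≫ Spec.map (CommRingCat.ofHom (algebraMap R (MvPolynomial (Fin n) R))) =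
        𝟙 (Spec (CommRingCat.of R)) := by
  classical
  set A := MvPolynomial (Fin n) R with hA
  -- U is a quasi-compact open, hence the complement of the zero locus of a finite set
  obtain ⟨t, ht⟩ := PrimeSpectrum.isCompact_isOpen_iff.mp
    ⟨hU, U.2⟩
  set m := t.card with hm
  set f : Fin m → A := fun i => (t.equivFin.symm i).1 with hf
  -- the auxiliary polynomial
  set g : MvPolynomial (Fin (n + m)) R :=
    ∑ i : Fin m, (MvPolynomial.rename (Fin.castAdd m) (f i)) *
      MvPolynomial.X (Fin.natAdd n i) with hg
  -- the hypothesis of the LG property for g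
  have hgunit : ∀ 𝔪 : Ideal R, 𝔪.IsMaximal →
      ∃ v : Fin (n + m) → R ⧸ 𝔪, IsUnit (MvPolynomial.eval v
        (MvPolynomial.map (Ideal.Quotient.mk 𝔪) g)) := by
    intro 𝔪 h𝔪
    haveI := h𝔪
    haveI := hres 𝔪 h𝔪
    haveI : Nontrivial (R ⧸ 𝔪) := Ideal.Quotient.nontrivial_iff.mpr h𝔪.ne_top
    haveI : IsDomain (R ⧸ 𝔪) := by
      letI : Field (R ⧸ 𝔪) := Ideal.Quotient.field 𝔪
      infer_instance
    set π := Ideal.Quotient.mk 𝔪 with hπ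
    -- the fibre is nonempty, so some f i has nonzero image over R⧸𝔪
    haveI : Nonempty ↑(Spec (CommRingCat.of (MvPolynomial (Fin n) (R ⧸ 𝔪)))) :=
      inferInstanceAs (Nonempty (PrimeSpectrum (MvPolynomial (Fin n) (R ⧸ 𝔪))))
    obtain ⟨x, hx⟩ := (hdense 𝔪 h𝔪).nonempty
    rw [Set.mem_preimage, ← ht] at hx
    replace hx := Set.not_subset.mp ((PrimeSpectrum.mem_zeroLocus _ _).not.mp hx)
    obtain ⟨a, hat, ha⟩ := hx
    have hat' : a ∈ t := Finset.mem_coe.mp hat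
    set i₀ : Fin m := t.equivFin ⟨a, hat'⟩ with hi₀
    have hfi₀ : f i₀ = a := by simp [hf, hi₀]
    have hane : MvPolynomial.map π a ≠ 0 := by
      intro h0
      apply ha
      show a ∈ Ideal.comap (MvPolynomial.map π) x.asIdeal
      simp [Ideal.mem_comap, h0]
    -- the image of g over R⧸𝔪 is nonzero
    have hmapg : MvPolynomial.map π g =
        ∑ i : Fin m, (MvPolynomial.rename (Fin.castAdd m) (MvPolynomial.map π (f i))) *
          MvPolynomial.X (Fin.natAdd n i) := by
      rw [hg, map_sum]
      refine Finset.sum_congr rfl fun i _ => ?_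
      rw [map_mul, MvPolynomial.map_rename, MvPolynomial.map_X]
    set ψ : MvPolynomial (Fin (n + m)) (R ⧸ 𝔪) →ₐ[R ⧸ 𝔪] MvPolynomial (Fin n) (R ⧸ 𝔪) :=
      MvPolynomial.aeval (Fin.addCases (motive := fun _ => MvPolynomial (Fin n) (R ⧸ 𝔪))
        MvPolynomial.X (fun j => if j = i₀ then 1 else 0)) with hψdef
    have hψ : ψ (MvPolynomial.map π g) = MvPolynomial.map π a := by
      rw [hmapg, map_sum]
      have hterm : ∀ j : Fin m,
          ψ ((MvPolynomial.rename (Fin.castAdd m) (MvPolynomial.map π (f j))) *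
            MvPolynomial.X (Fin.natAdd n j)) =
          (MvPolynomial.map π (f j)) * (if j = i₀ then 1 else 0) := by
        intro j
        rw [map_mul]
        congr 1
        · rw [hψdef, MvPolynomial.aeval_rename]
          have hcomp : (Fin.addCases (motive := fun _ => MvPolynomial (Fin n) (R ⧸ 𝔪))
              MvPolynomial.X (fun j => if j = i₀ then 1 else 0)) ∘ (Fin.castAdd m) =
              MvPolynomial.X := by
            funext j₁
            simp [Function.comp]
          rw [hcomp, MvPolynomial.aeval_X_left_apply]
        · rw [hψdef, MvPolynomial.aeval_X]
          simp
      rw [Finset.sum_congr rfl fun j _ => hterm j]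
      simp [hfi₀]
    have hgne : MvPolynomial.map π g ≠ 0 := by
      intro h0
      apply hane
      rw [← hψ, h0, map_zero]
    -- over the infinite field R⧸𝔪, a nonzero polynomial takes a nonzero value
    by_contra hno
    push_neg at hno
    apply hgne
    apply MvPolynomial.funext
    intro v
    simp only [map_zero]
    by_contra hv
    have hvu : IsUnit ((MvPolynomial.eval v) ((MvPolynomial.map π) g)) := by
      letI : Field (R ⧸ 𝔪) := Ideal.Quotient.field 𝔪
      exact isUnit_iff_exists_inv.mpr ⟨_, mul_inv_cancel₀ hv⟩
    exact hno v hvu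
  -- apply the LG property
  obtain ⟨u, hu⟩ := hR (n + m) (le_trans hn (Nat.le_add_right n m)) g hgunit
  set u₁ : Fin n → R := u ∘ Fin.castAdd m with hu₁
  have hueval : MvPolynomial.eval u g =
      ∑ i : Fin m, MvPolynomial.eval u₁ (f i) * u (Fin.natAdd n i) := by
    rw [hg, map_sum]
    refine Finset.sum_congr rfl fun i _ => ?_
    rw [map_mul, MvPolynomial.eval_rename, MvPolynomial.eval_X]
  -- every prime of R avoids some eval u₁ (f i)
  have hprime : ∀ x : PrimeSpectrum R, ∃ a ∈ t, MvPolynomial.eval u₁ a ∉ x.asIdeal := by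
    intro x
    by_contra hcon
    push_neg at hcon
    have hmem : MvPolynomial.eval u g ∈ x.asIdeal := by
      rw [hueval]
      refine Ideal.sum_mem _ fun i _ => x.asIdeal.mul_mem_right _ ?_
      exact hcon (f i) (t.equivFin.symm i).2
    exact x.isPrime.ne_top (x.asIdeal.eq_top_of_isUnit_mem hmem hu)
  -- build the morphism
  set ev : CommRingCat.of A ⟶ CommRingCat.of R :=
    CommRingCat.ofHom (MvPolynomial.eval u₁) with hev
  set s₀ : Spec (CommRingCat.of R) ⟶ Spec (CommRingCat.of A) := Spec.map ev with hs₀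
  have hrange : Set.range s₀.base ⊆ Set.range U.ι.base := by
    rw [Scheme.Opens.range_ι]
    rintro _ ⟨x, rfl⟩
    show s₀.base x ∈ (U : Set (Spec (CommRingCat.of A)))
    rw [← ht]
    intro hzl
    replace hzl := (PrimeSpectrum.mem_zeroLocus _ _).mp hzl
    obtain ⟨a, hat, ha⟩ := hprime x
    exact ha (hzl hat)
  refine ⟨IsOpenImmersion.lift U.ι s₀ hrange, ?_⟩
  rw [← Category.assoc, IsOpenImmersion.lift_fac]
  have hcomp : CommRingCat.ofHom (algebraMap R A) ≫ ev = 𝟙 (CommRingCat.of R) := by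
    ext r
    show MvPolynomial.eval u₁ (MvPolynomial.C r) = r
    exact MvPolynomial.eval_C r
  rw [hs₀, ← Spec.map_comp, hcomp, Spec.map_id]
end

section
/- Let R be an LG-ring and let M be a faithfully projective R-module. Then M contains a unimodular element, i.e. there exists m ∈ M such that R·m is a free R-module of rank 1 and a direct summand of M; equivalently, there exist m ∈ M and an R-linear map φ : M → R with φ(m) = 1. -/
/-- A faithfully projective module `M` (finitely generated, projective and
faithful) over an LG-ring `R` contains a unimodular element: there are `m ∈ M` and a linear
form `φ : M → R` with `φ(m) = 1`. -/
theorem lg_ring_faithfully_projective_exists_unimodular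
    {R : Type*} [CommRing R] (hR : IsLGRing R)
    (M : Type*) [AddCommGroup M] [Module R M]
    [Module.Finite R M] [Module.Projective R M] [FaithfulSMul R M] :
    ∃ (m : M) (φ : M →ₗ[R] R), φ m = 1 := by
  classical
  obtain ⟨n, g, hg⟩ := Module.Finite.exists_fin (R := R) (M := M)
  set N := n + 1 with hN
  set ms : Fin N → M := Fin.cons 0 g with hms
  have hspan : Submodule.span R (Set.range ms) = ⊤ := by
    rw [hms, Fin.range_cons, Submodule.span_insert_zero, hg]
  set π : (Fin N → R) →ₗ[R] M := Fintype.linearCombination R ms with hπ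
  have hπsurj : LinearMap.range π = ⊤ := by
    rw [hπ, Fintype.range_linearCombination, hspan]
  obtain ⟨s, hs⟩ := π.exists_rightInverse_of_surjective hπsurj
  have hsec : ∀ x : M, ∑ i, s x i • ms i = x := by
    intro x
    have := DFunLike.congr_fun hs x
    simpa [hπ, Fintype.linearCombination_apply] using this
  set a : Fin N → Fin N → R := fun i j => s (ms j) i with ha
  set f : MvPolynomial (Fin (N + N)) R :=
    ∑ i : Fin N, ∑ j : Fin N,
      MvPolynomial.C (a i j) * MvPolynomial.X (Fin.castAdd N i) *
        MvPolynomial.X (Fin.natAdd N j) with hf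
  have hresidue : ∀ 𝔪 : Ideal R, 𝔪.IsMaximal →
      ∃ v : Fin (N + N) → R ⧸ 𝔪, IsUnit (MvPolynomial.eval v
        (MvPolynomial.map (Ideal.Quotient.mk 𝔪) f)) := by
    intro 𝔪 hm
    -- first find i j with a i j ∉ 𝔪
    have hex : ∃ i j, a i j ∉ 𝔪 := by
      by_contra hcon
      push_neg at hcon
      have hmem : ∀ j, ms j ∈ 𝔪 • (⊤ : Submodule R M) := by
        intro j
        have h1 : ms j = ∑ i, a i j • ms i := (hsec (ms j)).symm
        rw [h1]
        exact Submodule.sum_mem _ fun i _ =>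
          Submodule.smul_mem_smul (hcon i j) Submodule.mem_top
      have htop : (⊤ : Submodule R M) ≤ 𝔪 • ⊤ := by
        have h2 : Submodule.span R (Set.range ms) ≤ 𝔪 • ⊤ :=
          Submodule.span_le.2 (Set.range_subset_iff.2 hmem)
        rwa [hspan] at h2
      obtain ⟨r, hr1, hr0⟩ :=
        Submodule.exists_sub_one_mem_and_smul_eq_zero_of_fg_of_le_smul 𝔪 ⊤
          Module.Finite.fg_top htop
      have hr : r = 0 := by
        refine eq_of_smul_eq_smul (α := M) fun x => ?_
        rw [hr0 x Submodule.mem_top, zero_smul]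
      rw [hr, zero_sub] at hr1
      have : (1 : R) ∈ 𝔪 := by simpa using 𝔪.neg_mem hr1
      exact hm.ne_top (Ideal.eq_top_iff_one 𝔪 |>.2 this)
    haveI := hm
    obtain ⟨i, j, hij⟩ := hex
    refine ⟨Fin.append (fun i' => if i' = i then 1 else 0)
      (fun j' => if j' = j then 1 else 0), ?_⟩
    have heval : MvPolynomial.eval
        (Fin.append (fun i' => if i' = i then (1 : R ⧸ 𝔪) else 0)
          (fun j' => if j' = j then 1 else 0))
        (MvPolynomial.map (Ideal.Quotient.mk 𝔪) f) = Ideal.Quotient.mk 𝔪 (a i j) := by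
      rw [hf]
      simp only [map_sum, map_mul, MvPolynomial.map_C, MvPolynomial.map_X,
        MvPolynomial.eval_C, MvPolynomial.eval_X, Fin.append_left, Fin.append_right,
        mul_ite, mul_one, mul_zero, ite_mul, zero_mul]
      rw [Finset.sum_eq_single i, Finset.sum_eq_single j]
      · simp
      · intro b _ hb; simp [hb]
      · simp
      · intro b _ hb
        rw [Finset.sum_eq_single j]
        · simp [hb]
        · intro c _ hc; simp [hc]
        · simp
      · simp
    rw [heval]
    have hne : Ideal.Quotient.mk 𝔪 (a i j) ≠ 0 := by
      simpa [Ideal.Quotient.eq_zero_iff_mem] using hij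
    letI : Field (R ⧸ 𝔪) := Ideal.Quotient.field 𝔪
    exact isUnit_iff_ne_zero.2 hne
  obtain ⟨u, hu⟩ := hR (N + N) (by omega) f hresidue
  set c : R := MvPolynomial.eval u f with hc
  set m : M := ∑ j, u (Fin.natAdd N j) • ms j with hm
  set ψ : M →ₗ[R] R :=
    ∑ i : Fin N, u (Fin.castAdd N i) • ((LinearMap.proj i).comp s) with hψ
  have hψm : ψ m = c := by
    have hsm : ∀ i, s m i = ∑ j, u (Fin.natAdd N j) * a i j := by
      intro i
      rw [hm]
      simp [ha, map_sum, map_smul, Finset.sum_apply, smul_eq_mul]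
    have hcval : c = ∑ i : Fin N, ∑ j : Fin N,
        a i j * u (Fin.castAdd N i) * u (Fin.natAdd N j) := by
      rw [hc, hf]
      simp [map_sum]
    rw [hψ, hcval]
    simp only [LinearMap.sum_apply, LinearMap.smul_apply, LinearMap.comp_apply,
      LinearMap.proj_apply, smul_eq_mul]
    refine Finset.sum_congr rfl fun i _ => ?_
    rw [hsm i, Finset.mul_sum]
    refine Finset.sum_congr rfl fun j _ => ?_
    ring
  obtain ⟨w, hw⟩ := hu
  refine ⟨m, (↑w⁻¹ : R) • ψ, ?_⟩
  rw [LinearMap.smul_apply, hψm, smul_eq_mul, ← hw]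
  exact w.inv_mul
end

section
/- Let R be a nonzero LG-ring and let M be a finitely generated projective R-module of constant rank r (i.e. the localization M_𝔭 is a free R_𝔭-module of rank r for every prime ideal 𝔭 of R). Then M is a free R-module of rank r. In particular, every invertible R-module is free, i.e. the Picard group of R is trivial. -/
universe u

/-- A module `M` over `R` has constant rank `r` if for every prime ideal `𝔭` of `R` the
localization `M_𝔭` is a free module of rank `r` over `R_𝔭`. -/
def HasConstantRank (R : Type u) (M : Type u) [CommRing R] [AddCommGroup M] [Module R M]
    (r : ℕ) : Prop :=
  ∀ (p : Ideal R) (_ : p.IsPrime),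
    Nonempty (LocalizedModule p.primeCompl M ≃ₗ[Localization p.primeCompl]
      (Fin r → Localization p.primeCompl))

section Helpers

variable {R : Type*} [CommRing R] (S : Submonoid R)

/-- Localization of modules commutes with binary products. -/
theorem LG.isLocalizedModule_prodMap
    {M M' N N' : Type*} [AddCommGroup M] [Module R M] [AddCommGroup M'] [Module R M']
    [AddCommGroup N] [Module R N] [AddCommGroup N'] [Module R N']
    (f : M →ₗ[R] M') (g : N →ₗ[R] N')
    [IsLocalizedModule S f] [IsLocalizedModule S g] :
    IsLocalizedModule S (f.prodMap g) where
  map_units s := by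
    rw [Module.End.isUnit_iff]
    have hf := (Module.End.isUnit_iff _).mp (IsLocalizedModule.map_units f s)
    have hg := (Module.End.isUnit_iff _).mp (IsLocalizedModule.map_units g s)
    have : ⇑(algebraMap R (Module.End R (M' × N')) s) =
        Prod.map (algebraMap R (Module.End R M') s) (algebraMap R (Module.End R N') s) := by
      funext x
      simp only [Module.algebraMap_end_apply, Prod.map_apply]
      rfl
    rw [this]
    exact hf.prodMap hg
  surj y := by
    obtain ⟨⟨x₁, s₁⟩, h₁⟩ := IsLocalizedModule.surj S f y.1
    obtain ⟨⟨x₂, s₂⟩, h₂⟩ := IsLocalizedModule.surj S g y.2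
    refine ⟨⟨(s₂ • x₁, s₁ • x₂), s₁ * s₂⟩, ?_⟩
    ext
    · simp only [Prod.smul_fst, LinearMap.prodMap_apply, Prod.map_fst, map_smul]
      rw [mul_comm, mul_smul, h₁, Submonoid.smul_def, Submonoid.smul_def, map_smul]
    · simp only [Prod.smul_snd, LinearMap.prodMap_apply, Prod.map_snd, map_smul]
      rw [mul_smul, h₂, Submonoid.smul_def, Submonoid.smul_def, map_smul]
  exists_of_eq := by
    intro x₁ x₂ h
    rw [Prod.ext_iff] at h
    simp only [LinearMap.prodMap_apply, Prod.map_fst, Prod.map_snd] at h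
    obtain ⟨c₁, hc₁⟩ := IsLocalizedModule.exists_of_eq (S := S) (f := f) h.1
    obtain ⟨c₂, hc₂⟩ := IsLocalizedModule.exists_of_eq (S := S) (f := g) h.2
    refine ⟨c₁ * c₂, ?_⟩
    ext
    · simp only [Prod.smul_fst]
      rw [mul_comm, mul_smul, mul_smul, hc₁]
    · simp only [Prod.smul_snd]
      rw [mul_smul, mul_smul, hc₂]

/-- An `R`-linear equivalence between modules over a localization of `R` is automatically
linear over the localization. -/
noncomputable def LG.extendScalarsEquiv
    (A : Type*) [CommSemiring A] [Algebra R A] [IsLocalization S A]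
    {M N : Type*} [AddCommMonoid M] [Module R M] [Module A M] [IsScalarTower R A M]
    [AddCommMonoid N] [Module R N] [Module A N] [IsScalarTower R A N]
    (e : M ≃ₗ[R] N) : M ≃ₗ[A] N :=
  LinearEquiv.ofLinear (e.toLinearMap.extendScalarsOfIsLocalization S A)
    (e.symm.toLinearMap.extendScalarsOfIsLocalization S A)
    (by ext x; simp) (by ext x; simp)

end Helpers

section Split

variable {R : Type*} [CommRing R] {M : Type*} [AddCommGroup M] [Module R M]

/-- The retraction of `M` onto the kernel of `ψ` given a `ψ`-unimodular element. -/
noncomputable def LG.kerRetract (ψ : M →ₗ[R] R) (m₀ : M) (h : ψ m₀ = 1) :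
    M →ₗ[R] LinearMap.ker ψ :=
  LinearMap.codRestrict (LinearMap.ker ψ)
    (LinearMap.id - (LinearMap.toSpanSingleton R M m₀).comp ψ)
    (fun x => by
      simp [LinearMap.mem_ker, LinearMap.toSpanSingleton_apply, map_smul, h, mul_comm])

lemma LG.kerRetract_comp_subtype (ψ : M →ₗ[R] R) (m₀ : M) (h : ψ m₀ = 1) :
    (LG.kerRetract ψ m₀ h).comp (LinearMap.ker ψ).subtype = LinearMap.id := by
  ext ⟨x, hx⟩
  simp only [LinearMap.mem_ker] at hx
  simp [LG.kerRetract, LinearMap.toSpanSingleton_apply, hx]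

/-- The splitting of a module along a unimodular linear functional. -/
noncomputable def LG.splitEquiv (ψ : M →ₗ[R] R) (m₀ : M) (h : ψ m₀ = 1) :
    M ≃ₗ[R] R × LinearMap.ker ψ :=
  LinearEquiv.ofLinear (LinearMap.prod ψ (LG.kerRetract ψ m₀ h))
    ((LinearMap.toSpanSingleton R M m₀).comp (LinearMap.fst R R _) +
      (LinearMap.ker ψ).subtype.comp (LinearMap.snd R R _))
    (by
      apply LinearMap.ext
      rintro ⟨a, x, hx⟩
      rw [LinearMap.mem_ker] at hx
      refine Prod.ext ?_ (Subtype.ext ?_)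
      · simp [LinearMap.toSpanSingleton_apply, h, hx]
      · simp [LG.kerRetract, LinearMap.toSpanSingleton_apply, h, hx, smul_sub, add_smul,
          mul_comm])
    (by
      apply LinearMap.ext
      intro x
      simp [LG.kerRetract, LinearMap.toSpanSingleton_apply])

end Split

section Descent

variable {R : Type u} [CommRing R]

/-- If `M ≃ R × K` and `M` localizes to a free module of rank `r+1` at a prime `p`,
then `K` localizes to a free module of rank `r` at `p`. -/
theorem LG.descent_rank (p : Ideal R) (hp : p.IsPrime) {M K : Type u}
    [AddCommGroup M] [Module R M] [AddCommGroup K] [Module R K]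
    (e : M ≃ₗ[R] R × K) (r : ℕ)
    (eloc : LocalizedModule p.primeCompl M ≃ₗ[Localization p.primeCompl]
      (Fin (r + 1) → Localization p.primeCompl)) :
    Nonempty (LocalizedModule p.primeCompl K ≃ₗ[Localization p.primeCompl]
      (Fin r → Localization p.primeCompl)) := by
  classical
  haveI := hp
  set S := p.primeCompl
  set A := Localization S
  set LK := LocalizedModule S K with hLK
  haveI : IsLocalizedModule S ((LocalizedModule.mkLinearMap S (R × K)) ∘ₗ
      (e : M →ₗ[R] R × K)) :=
    IsLocalizedModule.of_linearEquiv_right S (LocalizedModule.mkLinearMap S (R × K)) e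
  haveI := LG.isLocalizedModule_prodMap S (LocalizedModule.mkLinearMap S R)
    (LocalizedModule.mkLinearMap S K)
  let e1 : LocalizedModule S M ≃ₗ[R] LocalizedModule S (R × K) :=
    IsLocalizedModule.iso S ((LocalizedModule.mkLinearMap S (R × K)) ∘ₗ (e : M →ₗ[R] R × K))
  let e2 : LocalizedModule S (R × K) ≃ₗ[R] LocalizedModule S R × LK :=
    IsLocalizedModule.iso S ((LocalizedModule.mkLinearMap S R).prodMap
      (LocalizedModule.mkLinearMap S K))
  let e3 : LocalizedModule S R ≃ₗ[R] A := IsLocalizedModule.iso S (Algebra.linearMap R A)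
  let e4 : LocalizedModule S M ≃ₗ[R] A × LK :=
    e1 ≪≫ₗ e2 ≪≫ₗ (e3.prodCongr (LinearEquiv.refl R LK))
  let eA : (A × LK) ≃ₗ[A] (Fin (r + 1) → A) :=
    (LG.extendScalarsEquiv S A e4.symm) ≪≫ₗ eloc
  haveI : Module.Finite A LK := by
    refine Module.Finite.of_surjective
      (M := Fin (r+1) → A) ((LinearMap.snd A A LK) ∘ₗ (eA.symm : _ →ₗ[A] A × LK)) ?_
    intro y
    exact ⟨eA (0, y), by simp⟩
  haveI : Module.Projective A LK := by
    refine Module.Projective.of_split ((eA : _ →ₗ[A] Fin (r+1) → A) ∘ₗ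
      (LinearMap.inr A A LK)) ((LinearMap.snd A A LK) ∘ₗ (eA.symm : _ →ₗ[A] A × LK)) ?_
    apply LinearMap.ext; intro y
    simp
  haveI : Module.FinitePresentation A LK := Module.finitePresentation_of_projective A LK
  haveI : Module.Free A LK := Module.free_of_flat_of_isLocalRing
  have hfr : Module.finrank A LK = r := by
    have h1 : Module.finrank A (A × LK) = Module.finrank A (Fin (r + 1) → A) :=
      LinearEquiv.finrank_eq eA
    rw [Module.finrank_prod, Module.finrank_pi, Module.finrank_self, Fintype.card_fin] at h1
    omega
  exact ⟨hfr ▸ (Module.finBasis A LK).equivFun⟩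

end Descent

open MvPolynomial in
/-- Over an LG-ring, a finitely generated projective module of constant rank `r+1`
admits a unimodular element. -/
theorem LG.exists_unimodular {R : Type u} [CommRing R] (hR : IsLGRing R)
    (M : Type u) [AddCommGroup M] [Module R M] [Module.Finite R M] [Module.Projective R M]
    (r : ℕ) (hrank : HasConstantRank R M (r + 1)) :
    ∃ (ψ : M →ₗ[R] R) (m₀ : M), ψ m₀ = 1 := by
  classical
  obtain ⟨n, g0, hg0⟩ := Module.Finite.exists_fin (R := R) (M := M)
  set N := n + 1 with hNdef
  set m' : Fin N → M := fun i => if h : (i : ℕ) < n then g0 ⟨(i : ℕ), h⟩ else 0 with hm'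
  have hspan : Submodule.span R (Set.range m') = ⊤ := by
    rw [eq_top_iff, ← hg0, Submodule.span_le]
    rintro _ ⟨k, rfl⟩
    apply Submodule.subset_span
    exact ⟨Fin.castSucc k, by simp [hm', Fin.is_lt]⟩
  set π : (Fin N → R) →ₗ[R] M := Fintype.linearCombination R m' with hπdef
  have hπ : Function.Surjective π := by
    rw [← LinearMap.range_eq_top, hπdef, Fintype.range_linearCombination, hspan]
  obtain ⟨s, hs⟩ := Module.projective_lifting_property π LinearMap.id hπ
  have hsx : ∀ x : M, ∑ j, s x j • m' j = x := fun x => by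
    have h := LinearMap.congr_fun hs x
    simpa [hπdef, Fintype.linearCombination_apply] using h
  set a : Fin N → Fin N → R := fun i j => s (m' i) j with ha
  set f₀ : MvPolynomial (Fin N ⊕ Fin N) R :=
    ∑ i : Fin N, ∑ j : Fin N, (C (a i j) * X (Sum.inl i) * X (Sum.inr j)) with hf₀
  set F : MvPolynomial (Fin (N + N)) R := rename finSumFinEquiv f₀ with hF
  have hres : ∀ 𝔪 : Ideal R, 𝔪.IsMaximal →
      ∃ v : Fin (N + N) → R ⧸ 𝔪, IsUnit (eval v (map (Ideal.Quotient.mk 𝔪) F)) := by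
    intro 𝔪 h𝔪
    have hexists : ∃ i j, a i j ∉ 𝔪 := by
      by_contra hcon
      push_neg at hcon
      have htop : (⊤ : Submodule R M) ≤ 𝔪 • ⊤ := by
        have hm : ∀ j, m' j ∈ 𝔪 • (⊤ : Submodule R M) := by
          intro j0
          rw [← hsx (m' j0)]
          exact Submodule.sum_mem _ fun k _ =>
            Submodule.smul_mem_smul (hcon j0 k) Submodule.mem_top
        intro x _
        rw [← hsx x]
        exact Submodule.sum_mem _ fun k _ => Submodule.smul_mem _ _ (hm k)
      obtain ⟨cc, hc1, hc0⟩ :=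
        Submodule.exists_sub_one_mem_and_smul_eq_zero_of_fg_of_le_smul 𝔪 ⊤
          Module.Finite.fg_top htop
      have hcnot : cc ∈ 𝔪.primeCompl := by
        intro hc
        have h1 : (1 : R) ∈ 𝔪 := by
          have := 𝔪.sub_mem hc hc1
          simpa using this
        exact h𝔪.ne_top ((Ideal.eq_top_iff_one _).mpr h1)
      haveI hp := h𝔪.isPrime
      obtain ⟨e⟩ := hrank 𝔪 hp
      haveI : Subsingleton (LocalizedModule 𝔪.primeCompl M) := by
        refine subsingleton_of_forall_eq 0 fun x => ?_
        induction x using LocalizedModule.induction_on with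
        | _ m t =>
          rw [show (0 : LocalizedModule 𝔪.primeCompl M) = LocalizedModule.mk 0 t from
            (LocalizedModule.zero_mk t).symm, LocalizedModule.mk_eq]
          exact ⟨⟨cc, hcnot⟩, by simp [Submonoid.smul_def, hc0 _ Submodule.mem_top]⟩
      haveI := e.symm.toEquiv.subsingleton
      exact (false_of_nontrivial_of_subsingleton
        (Fin (r + 1) → Localization 𝔪.primeCompl)).elim
    obtain ⟨i, j, hij⟩ := hexists
    refine ⟨(Sum.elim (Pi.single i (1 : R ⧸ 𝔪)) (Pi.single j 1)) ∘ finSumFinEquiv.symm, ?_⟩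
    rw [hF, map_rename, eval_rename]
    have hcomp : (Sum.elim (Pi.single i (1 : R ⧸ 𝔪)) (Pi.single j 1) ∘ ⇑finSumFinEquiv.symm)
        ∘ ⇑finSumFinEquiv = Sum.elim (Pi.single i (1 : R ⧸ 𝔪)) (Pi.single j 1) := by
      funext x
      simp
    rw [hcomp]
    have hval : eval (Sum.elim (Pi.single i (1 : R ⧸ 𝔪)) (Pi.single j 1))
        (map (Ideal.Quotient.mk 𝔪) f₀) = Ideal.Quotient.mk 𝔪 (a i j) := by
      simp only [hf₀, map_sum, map_mul, MvPolynomial.map_C, MvPolynomial.map_X,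
        eval_mul, eval_C, eval_X, Sum.elim_inl, Sum.elim_inr, Pi.single_apply]
      simp [Finset.sum_ite_eq', mul_ite]
    haveI := h𝔪
    rw [hval]
    obtain ⟨bb, hbb⟩ := Ideal.Quotient.exists_inv
      (I := 𝔪) (a := Ideal.Quotient.mk 𝔪 (a i j))
      (fun h0 => hij (Ideal.Quotient.eq_zero_iff_mem.mp h0))
    exact IsUnit.of_mul_eq_one bb hbb
  obtain ⟨u, hu⟩ := hR (N + N) (by omega) F hres
  set w : Fin N ⊕ Fin N → R := u ∘ finSumFinEquiv with hw
  have hWval : eval u F = ∑ i, ∑ j, a i j * w (Sum.inl i) * w (Sum.inr j) := by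
    rw [hF, eval_rename]
    simp [hf₀, hw, finSumFinEquiv_apply_left, finSumFinEquiv_apply_right]
  set b : Fin N → R := fun i => w (Sum.inl i) with hb
  set c : Fin N → R := fun j => w (Sum.inr j) with hc
  set m₀ : M := ∑ i, b i • m' i with hm₀
  set φ : M →ₗ[R] R := ∑ j : Fin N, c j • ((LinearMap.proj j).comp s) with hφdef
  have hφx : ∀ x : M, φ x = ∑ j, c j * s x j := by
    intro x
    simp [hφdef, LinearMap.sum_apply, LinearMap.smul_apply, LinearMap.proj, smul_eq_mul]
  have hφ : φ m₀ = eval u F := by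
    rw [hφx, hWval]
    have hsm₀ : ∀ j, s m₀ j = ∑ i, b i * a i j := by
      intro j
      rw [hm₀, map_sum]
      simp [ha, Finset.sum_apply, smul_eq_mul]
    rw [Finset.sum_comm]
    refine Finset.sum_congr rfl fun j _ => ?_
    rw [hsm₀ j, Finset.mul_sum]
    refine Finset.sum_congr rfl fun i _ => ?_
    ring
  refine ⟨((hu.unit⁻¹ : Rˣ) : R) • φ, m₀, ?_⟩
  rw [LinearMap.smul_apply, hφ, smul_eq_mul]
  exact hu.val_inv_mul

/-- The standard splitting of `Fin (r+1) → R`. -/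
noncomputable def LG.finSuccPiEquiv (R : Type*) [CommRing R] (r : ℕ) :
    (Fin (r + 1) → R) ≃ₗ[R] R × (Fin r → R) :=
  (LinearEquiv.funCongrLeft R R
      ((finSumFinEquiv (m := 1) (n := r)).trans (finCongr (by omega))).symm).symm ≪≫ₗ
    (LinearEquiv.sumArrowLequivProdArrow (Fin 1) (Fin r) R R) ≪≫ₗ
    ((LinearEquiv.funUnique (Fin 1) R R).prodCongr (LinearEquiv.refl R (Fin r → R)))

/-- The inductive heart of the theorem. -/
theorem LG.aux_free {R : Type u} [CommRing R] [Nontrivial R] (hR : IsLGRing R) (r : ℕ) :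
    ∀ (M : Type u) [AddCommGroup M] [Module R M] [Module.Finite R M] [Module.Projective R M],
      HasConstantRank R M r → Nonempty (M ≃ₗ[R] (Fin r → R)) := by
  induction r with
  | zero =>
    intro M _ _ _ _ hrank
    haveI : Subsingleton M := by
      refine Module.subsingleton_of_localization_maximal (R := R) (M := M)
        (Mₚ := fun P _ => LocalizedModule P.primeCompl M)
        (f := fun P _ => LocalizedModule.mkLinearMap P.primeCompl M) ?_
      intro P hP
      obtain ⟨e⟩ := hrank P hP.isPrime
      exact e.toEquiv.subsingleton
    exact ⟨LinearEquiv.ofLinear (0 : M →ₗ[R] (Fin 0 → R)) 0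
      (LinearMap.ext fun x => Subsingleton.elim _ _)
      (LinearMap.ext fun x => Subsingleton.elim _ _)⟩
  | succ r ih =>
    intro M _ _ _ _ hrank
    obtain ⟨ψ, m₀, hψ⟩ := LG.exists_unimodular hR M r hrank
    set K := LinearMap.ker ψ with hK
    haveI : Module.Finite R K := by
      refine Module.Finite.of_surjective (LG.kerRetract ψ m₀ hψ) fun y => ⟨(y : M), ?_⟩
      exact LinearMap.congr_fun (LG.kerRetract_comp_subtype ψ m₀ hψ) y
    haveI : Module.Projective R K :=
      Module.Projective.of_split _ _ (LG.kerRetract_comp_subtype ψ m₀ hψ)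
    have hKrank : HasConstantRank R K r := fun p hp => by
      obtain ⟨eloc⟩ := hrank p hp
      exact LG.descent_rank p hp (LG.splitEquiv ψ m₀ hψ) r eloc
    obtain ⟨eK⟩ := ih K hKrank
    exact ⟨(LG.splitEquiv ψ m₀ hψ) ≪≫ₗ ((LinearEquiv.refl R R).prodCongr eK) ≪≫ₗ
      (LG.finSuccPiEquiv R r).symm⟩

/-- A finitely generated projective module of constant rank `r` over a
nonzero LG-ring is free of rank `r`.  In particular every invertible module (finitely
generated projective of constant rank `1`) is free, i.e. `Pic(R)` is trivial. -/
theorem lg_ring_constant_rank_projective_free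
    {R : Type u} [CommRing R] [Nontrivial R] (hR : IsLGRing R)
    (M : Type u) [AddCommGroup M] [Module R M]
    [Module.Finite R M] [Module.Projective R M] (r : ℕ)
    (hrank : HasConstantRank R M r) :
    Nonempty (M ≃ₗ[R] (Fin r → R)) ∧
      ∀ (N : Type u) [AddCommGroup N] [Module R N],
        Module.Finite R N → Module.Projective R N → HasConstantRank R N 1 →
          Nonempty (N ≃ₗ[R] R) := by
  refine ⟨LG.aux_free hR r M hrank, ?_⟩
  intro N _ _ hfin hproj h1
  haveI := hfin
  haveI := hproj
  obtain ⟨e⟩ := LG.aux_free hR 1 N h1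
  exact ⟨e ≪≫ₗ LinearEquiv.funUnique (Fin 1) R R⟩
end

section
/- A commutative ring R is an LG-ring if and only if the quotient R/Jac(R) by its Jacobson radical is an LG-ring. -/
open MvPolynomial Ideal

private lemma mk_eval {R S : Type*} [CommRing R] [CommRing S] (φ : R →+* S)
    {n : ℕ} (f : MvPolynomial (Fin n) R) (u : Fin n → R) :
    φ (eval u f) = eval (φ ∘ u) (map φ f) := by
  rw [eval_map, ← eval₂_id (g := u) f, eval₂_comp_left, RingHom.comp_id]

private lemma eval_transfer {R : Type*} [CommRing R] {J 𝔪 : Ideal R} (h : J ≤ 𝔪)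
    {n : ℕ} (f : MvPolynomial (Fin n) R)
    (v : Fin n → (R ⧸ J) ⧸ 𝔪.map (Ideal.Quotient.mk J)) :
    (DoubleQuot.quotQuotEquivQuotOfLE h).toRingHom
      (eval v (map (Ideal.Quotient.mk (𝔪.map (Ideal.Quotient.mk J)))
        (map (Ideal.Quotient.mk J) f)))
    = eval (⇑(DoubleQuot.quotQuotEquivQuotOfLE h).toRingHom ∘ v)
        (map (Ideal.Quotient.mk 𝔪) f) := by
  rw [MvPolynomial.map_map, eval_map, eval_map, eval₂_comp_left]
  congr 1

private lemma isUnit_of_mk_jacobson {R : Type*} [CommRing R] {a : R}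
    (h : IsUnit (Ideal.Quotient.mk (Ideal.jacobson (⊥ : Ideal R)) a)) : IsUnit a := by
  obtain ⟨b, hb⟩ := h.exists_right_inv
  obtain ⟨c, rfl⟩ := Ideal.Quotient.mk_surjective b
  have hmem : a * c - 1 ∈ Ideal.jacobson (⊥ : Ideal R) := by
    rw [← Ideal.Quotient.eq]
    simpa [_root_.map_mul] using hb
  exact isUnit_of_mul_isUnit_left (Ideal.isUnit_of_sub_one_mem_jacobson_bot _ hmem)

/-- A commutative ring `R` is an LG-ring if and only if `R/Jac(R)` is an
LG-ring, where `Jac(R)` is the Jacobson radical (the intersection of all maximal ideals). -/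
theorem isLGRing_iff_quotient_jacobson {R : Type*} [CommRing R] :
    IsLGRing R ↔ IsLGRing (R ⧸ Ideal.jacobson (⊥ : Ideal R)) := by
  have hle : ∀ 𝔪 : Ideal R, 𝔪.IsMaximal → Ideal.jacobson (⊥ : Ideal R) ≤ 𝔪 := fun 𝔪 h𝔪 =>
    sInf_le ⟨bot_le, h𝔪⟩
  constructor
  · intro hR n hn g hg
    obtain ⟨f, rfl⟩ := MvPolynomial.map_surjective
      (Ideal.Quotient.mk (Ideal.jacobson (⊥ : Ideal R))) Ideal.Quotient.mk_surjective g
    have hyp : ∀ 𝔪 : Ideal R, 𝔪.IsMaximal →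
        ∃ v : Fin n → R ⧸ 𝔪, IsUnit (MvPolynomial.eval v
          (MvPolynomial.map (Ideal.Quotient.mk 𝔪) f)) := by
      intro 𝔪 h𝔪
      have hJm := hle 𝔪 h𝔪
      have h𝔫max : (𝔪.map (Ideal.Quotient.mk (Ideal.jacobson (⊥ : Ideal R)))).IsMaximal := by
        rcases Ideal.map_eq_top_or_isMaximal_of_surjective
          (Ideal.Quotient.mk (Ideal.jacobson (⊥ : Ideal R)))
          Ideal.Quotient.mk_surjective h𝔪 with h | h
        · exfalso
          have hc := Ideal.comap_map_of_surjective
            (Ideal.Quotient.mk (Ideal.jacobson (⊥ : Ideal R)))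
            Ideal.Quotient.mk_surjective 𝔪
          rw [h, Ideal.comap_top, ← RingHom.ker_eq_comap_bot, Ideal.mk_ker,
            sup_eq_left.mpr hJm] at hc
          exact h𝔪.ne_top hc.symm
        · exact h
      obtain ⟨v, hv⟩ := hg _ h𝔫max
      refine ⟨⇑(DoubleQuot.quotQuotEquivQuotOfLE hJm).toRingHom ∘ v, ?_⟩
      rw [← eval_transfer hJm f v]
      exact hv.map _
    obtain ⟨u, hu⟩ := hR n hn f hyp
    refine ⟨(Ideal.Quotient.mk _) ∘ u, ?_⟩
    rw [← mk_eval (Ideal.Quotient.mk (Ideal.jacobson (⊥ : Ideal R))) f u]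
    exact hu.map _
  · intro hQ n hn f hf
    have hyp : ∀ 𝔫 : Ideal (R ⧸ Ideal.jacobson (⊥ : Ideal R)), 𝔫.IsMaximal →
        ∃ v : Fin n → _ ⧸ 𝔫, IsUnit (MvPolynomial.eval v
          (MvPolynomial.map (Ideal.Quotient.mk 𝔫)
            (map (Ideal.Quotient.mk (Ideal.jacobson (⊥ : Ideal R))) f))) := by
      intro 𝔫 h𝔫
      have h𝔪max : (𝔫.comap (Ideal.Quotient.mk (Ideal.jacobson (⊥ : Ideal R)))).IsMaximal :=
        Ideal.comap_isMaximal_of_surjective _ Ideal.Quotient.mk_surjective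
      have hJm := hle _ h𝔪max
      have hmap : (𝔫.comap (Ideal.Quotient.mk (Ideal.jacobson (⊥ : Ideal R)))).map
          (Ideal.Quotient.mk (Ideal.jacobson (⊥ : Ideal R))) = 𝔫 :=
        Ideal.map_comap_of_surjective _ Ideal.Quotient.mk_surjective 𝔫
      obtain ⟨v, hv⟩ := hf _ h𝔪max
      rw [← hmap]
      refine ⟨(DoubleQuot.quotQuotEquivQuotOfLE hJm).symm ∘ v, ?_⟩
      have ht := eval_transfer hJm f ((DoubleQuot.quotQuotEquivQuotOfLE hJm).symm ∘ v)
      have hv' : ⇑(DoubleQuot.quotQuotEquivQuotOfLE hJm).toRingHom ∘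
          (⇑(DoubleQuot.quotQuotEquivQuotOfLE hJm).symm ∘ v) = v := by
        funext i; simp
      rw [hv'] at ht
      rw [← ht] at hv
      simpa using hv.map (DoubleQuot.quotQuotEquivQuotOfLE hJm).symm.toRingHom
    obtain ⟨u, hu⟩ := hQ n hn (map (Ideal.Quotient.mk (Ideal.jacobson (⊥ : Ideal R))) f) hyp
    obtain ⟨w, hw⟩ : ∃ w : Fin n → R, (Ideal.Quotient.mk _) ∘ w = u := by
      choose w hw using fun i => Ideal.Quotient.mk_surjective (u i)
      exact ⟨w, funext hw⟩
    refine ⟨w, isUnit_of_mk_jacobson ?_⟩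
    rw [mk_eval (Ideal.Quotient.mk _) f w, hw]
    exact hu
end

section
/- Let R be an LG-ring, let M₁ and M₂ be finitely generated projective R-modules, and let N be a faithfully projective R-module. If M₁ ⊗_R N and M₂ ⊗_R N are isomorphic as R-modules, then M₁ and M₂ are isomorphic as R-modules. In particular, for any n ≥ 1, if the direct sums of n copies M₁^{⊕n} and M₂^{⊕n} are isomorphic, then M₁ ≅ M₂. -/
open TensorProduct

section Aux

variable {R : Type*} [CommRing R]

lemma coord_mem_of_mem_smul_top {m : ℕ} (I : Ideal R) {x : Fin m → R}
    (hx : x ∈ (I • ⊤ : Submodule R (Fin m → R))) (i : Fin m) : x i ∈ I := by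
  refine Submodule.smul_induction_on hx ?_ ?_
  · intro r hr z _
    simpa using I.mul_mem_right (z i) hr
  · intro a b ha hb
    simpa using I.add_mem ha hb

lemma map_mem_smul_top {M F : Type*} [AddCommGroup M] [Module R M]
    [AddCommGroup F] [Module R F] (f : M →ₗ[R] F) (I : Ideal R) {z : M}
    (hz : z ∈ (I • ⊤ : Submodule R M)) : f z ∈ (I • ⊤ : Submodule R F) := by
  refine Submodule.smul_induction_on hz ?_ ?_
  · intro r hr m _
    rw [map_smul]
    exact Submodule.smul_mem_smul hr Submodule.mem_top
  · intro a b ha hb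
    rw [map_add]
    exact Submodule.add_mem _ ha hb

/-- The "E-trick": if `E := s ∘ e ∘ p + id - s ∘ p` has a two-sided inverse `w`,
and `p ∘ s = id`, then `e` is bijective. -/
lemma bijective_of_E {M F : Type*} [AddCommGroup M] [Module R M]
    [AddCommGroup F] [Module R F]
    (s : M →ₗ[R] F) (p : F →ₗ[R] M) (hps : ∀ x, p (s x) = x)
    (e : M →ₗ[R] M) (w : F →ₗ[R] F)
    (h1 : ∀ z, w ((s ∘ₗ e ∘ₗ p + LinearMap.id - s ∘ₗ p : F →ₗ[R] F) z) = z)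
    (h2 : ∀ z, (s ∘ₗ e ∘ₗ p + LinearMap.id - s ∘ₗ p : F →ₗ[R] F) (w z) = z) :
    Function.Bijective e := by
  set E : F →ₗ[R] F := s ∘ₗ e ∘ₗ p + LinearMap.id - s ∘ₗ p with hE
  have hEs : ∀ y : M, E (s y) = s (e y) := by
    intro y
    simp [hE, LinearMap.sub_apply, LinearMap.add_apply, LinearMap.comp_apply, hps]
  have hpE : ∀ z : F, p (E z) = e (p z) := by
    intro z
    simp [hE, LinearMap.sub_apply, LinearMap.add_apply, LinearMap.comp_apply, hps]
  constructor
  · intro a b hab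
    have : p (w (s (e a))) = p (w (s (e b))) := by rw [hab]
    rw [← hEs, ← hEs, h1, h1] at this
    rwa [hps, hps] at this
  · intro x
    refine ⟨p (w (s x)), ?_⟩
    calc e (p (w (s x))) = p (E (w (s x))) := (hpE _).symm
    _ = p (s x) := by rw [h2]
    _ = x := hps x

/-- Pushing a ring hom through the basic determinant expression. -/
lemma map_detExpr {S T : Type*} [CommRing S] [CommRing T] (f : S →+* T) {m₁ m₂ : ℕ}
    (Q₁ : Matrix (Fin m₁) (Fin m₁) S) (Q₂ : Matrix (Fin m₂) (Fin m₂) S)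
    (X : Matrix (Fin m₂) (Fin m₁) S) (Y : Matrix (Fin m₁) (Fin m₂) S) :
    f ((Q₁ * Y * Q₂ * X * Q₁ + 1 - Q₁).det * (Q₂ * X * Q₁ * Y * Q₂ + 1 - Q₂).det) =
      (Q₁.map f * Y.map f * Q₂.map f * X.map f * Q₁.map f + 1 - Q₁.map f).det *
      (Q₂.map f * X.map f * Q₁.map f * Y.map f * Q₂.map f + 1 - Q₂.map f).det := by
  have hmap : ∀ {k l : ℕ} (A B : Matrix (Fin k) (Fin l) S),
      (A - B).map f = A.map f - B.map f := fun A B =>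
    Matrix.map_sub f (fun a b => map_sub f a b) A B
  have hmap' : ∀ {k l : ℕ} (A B : Matrix (Fin k) (Fin l) S),
      (A + B).map f = A.map f + B.map f := fun A B =>
    Matrix.map_add f (fun a b => map_add f a b) A B
  have hone : ∀ {k : ℕ}, ((1 : Matrix (Fin k) (Fin k) S)).map f = 1 := fun {k} =>
    Matrix.map_one f (map_zero f) (map_one f)
  rw [map_mul, RingHom.map_det, RingHom.map_det, RingHom.mapMatrix_apply,
    RingHom.mapMatrix_apply]
  rw [hmap, hmap, hmap', hmap', hone, hone]
  rw [Matrix.map_mul, Matrix.map_mul, Matrix.map_mul, Matrix.map_mul,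
    Matrix.map_mul, Matrix.map_mul, Matrix.map_mul, Matrix.map_mul]

end Aux

section K2
variable {R : Type*} [CommRing R]

set_option maxHeartbeats 1000000 in
open MvPolynomial in
lemma eval₂_detExpr {T : Type*} [CommRing T] {m₁ m₂ : ℕ}
    (Q₁ : Matrix (Fin m₁) (Fin m₁) R) (Q₂ : Matrix (Fin m₂) (Fin m₂) R)
    (θ : R →+* T) (v : ((Fin m₂ × Fin m₁) ⊕ (Fin m₁ × Fin m₂)) → T) :
    MvPolynomial.eval₂ θ v
      ((Q₁.map (MvPolynomial.C (σ := (Fin m₂ × Fin m₁) ⊕ (Fin m₁ × Fin m₂)) (R := R)) * (Matrix.of fun i j =>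
            (X (Sum.inr (i, j)) : MvPolynomial ((Fin m₂ × Fin m₁) ⊕ (Fin m₁ × Fin m₂)) R)) *
          Q₂.map (MvPolynomial.C (σ := (Fin m₂ × Fin m₁) ⊕ (Fin m₁ × Fin m₂)) (R := R)) *
          (Matrix.of fun i j =>
            (X (Sum.inl (i, j)) : MvPolynomial ((Fin m₂ × Fin m₁) ⊕ (Fin m₁ × Fin m₂)) R)) *
          Q₁.map (MvPolynomial.C (σ := (Fin m₂ × Fin m₁) ⊕ (Fin m₁ × Fin m₂)) (R := R)) + 1 - Q₁.map (MvPolynomial.C (σ := (Fin m₂ × Fin m₁) ⊕ (Fin m₁ × Fin m₂)) (R := R))).det *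
       (Q₂.map (MvPolynomial.C (σ := (Fin m₂ × Fin m₁) ⊕ (Fin m₁ × Fin m₂)) (R := R)) * (Matrix.of fun i j =>
            (X (Sum.inl (i, j)) : MvPolynomial ((Fin m₂ × Fin m₁) ⊕ (Fin m₁ × Fin m₂)) R)) *
          Q₁.map (MvPolynomial.C (σ := (Fin m₂ × Fin m₁) ⊕ (Fin m₁ × Fin m₂)) (R := R)) *
          (Matrix.of fun i j =>
            (X (Sum.inr (i, j)) : MvPolynomial ((Fin m₂ × Fin m₁) ⊕ (Fin m₁ × Fin m₂)) R)) *
          Q₂.map (MvPolynomial.C (σ := (Fin m₂ × Fin m₁) ⊕ (Fin m₁ × Fin m₂)) (R := R)) + 1 - Q₂.map (MvPolynomial.C (σ := (Fin m₂ × Fin m₁) ⊕ (Fin m₁ × Fin m₂)) (R := R))).det) =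
    (Q₁.map θ * (Matrix.of fun i j => v (Sum.inr (i, j))) * Q₂.map θ *
        (Matrix.of fun i j => v (Sum.inl (i, j))) * Q₁.map θ + 1 - Q₁.map θ).det *
    (Q₂.map θ * (Matrix.of fun i j => v (Sum.inl (i, j))) * Q₁.map θ *
        (Matrix.of fun i j => v (Sum.inr (i, j))) * Q₂.map θ + 1 - Q₂.map θ).det := by
  have h := map_detExpr (eval₂Hom θ v) (Q₁.map MvPolynomial.C) (Q₂.map MvPolynomial.C)
      (Matrix.of fun i j => X (Sum.inl (i, j))) (Matrix.of fun i j => X (Sum.inr (i, j)))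
  have hQ : ∀ {k : ℕ} (Q : Matrix (Fin k) (Fin k) R),
      (Q.map MvPolynomial.C).map (eval₂Hom θ v) = Q.map θ := by
    intro k Q
    rw [Matrix.map_map]
    ext i j
    simp [Matrix.map_apply]
  have hX : (Matrix.of fun i j => (X (Sum.inl (i, j)) : MvPolynomial _ R)
        : Matrix (Fin m₂) (Fin m₁) _).map (eval₂Hom θ v)
      = Matrix.of fun i j => v (Sum.inl (i, j)) := by
    ext i j; simp [Matrix.map_apply]
  have hY : (Matrix.of fun i j => (X (Sum.inr (i, j)) : MvPolynomial _ R)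
        : Matrix (Fin m₁) (Fin m₂) _).map (eval₂Hom θ v)
      = Matrix.of fun i j => v (Sum.inr (i, j)) := by
    ext i j; simp [Matrix.map_apply]
  rw [hQ, hQ, hX, hY] at h
  simpa using h

variable {M₁ M₂ : Type*} [AddCommGroup M₁] [Module R M₁] [AddCommGroup M₂] [Module R M₂]

lemma EB_matrix {m₁ m₂ : ℕ}
    (s₁ : M₁ →ₗ[R] (Fin m₁ → R)) (p₁ : (Fin m₁ → R) →ₗ[R] M₁) (hps₁ : ∀ x, p₁ (s₁ x) = x)
    (s₂ : M₂ →ₗ[R] (Fin m₂ → R)) (p₂ : (Fin m₂ → R) →ₗ[R] M₂) (hps₂ : ∀ x, p₂ (s₂ x) = x)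
    (h : M₁ →ₗ[R] M₂) (h' : M₂ →ₗ[R] M₁) :
    LinearMap.toMatrix'
        ((s₁ ∘ₗ (h' ∘ₗ h) ∘ₗ p₁ + LinearMap.id - s₁ ∘ₗ p₁ : (Fin m₁ → R) →ₗ[R] Fin m₁ → R))
      = LinearMap.toMatrix' (s₁ ∘ₗ p₁) * LinearMap.toMatrix' (s₁ ∘ₗ h' ∘ₗ p₂)
        * LinearMap.toMatrix' (s₂ ∘ₗ p₂) * LinearMap.toMatrix' (s₂ ∘ₗ h ∘ₗ p₁)
        * LinearMap.toMatrix' (s₁ ∘ₗ p₁) + 1 - LinearMap.toMatrix' (s₁ ∘ₗ p₁) := by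
  have hcomp : s₁ ∘ₗ (h' ∘ₗ h) ∘ₗ p₁
      = (s₁ ∘ₗ p₁) ∘ₗ ((s₁ ∘ₗ h' ∘ₗ p₂) ∘ₗ ((s₂ ∘ₗ p₂) ∘ₗ ((s₂ ∘ₗ h ∘ₗ p₁) ∘ₗ (s₁ ∘ₗ p₁)))) := by
    apply LinearMap.ext; intro z
    simp [LinearMap.comp_apply, hps₁, hps₂]
  rw [map_sub, map_add, hcomp, LinearMap.toMatrix'_comp, LinearMap.toMatrix'_comp,
    LinearMap.toMatrix'_comp, LinearMap.toMatrix'_comp, LinearMap.toMatrix'_id]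
  simp only [Matrix.mul_assoc]

lemma toMatrix_E_map_eq_one {m₁ : ℕ} (𝔪 : Ideal R)
    (s₁ : M₁ →ₗ[R] (Fin m₁ → R)) (p₁ : (Fin m₁ → R) →ₗ[R] M₁)
    (e : M₁ →ₗ[R] M₁) (he : ∀ x, e x - x ∈ (𝔪 • ⊤ : Submodule R M₁)) :
    (LinearMap.toMatrix'
        ((s₁ ∘ₗ e ∘ₗ p₁ + LinearMap.id - s₁ ∘ₗ p₁ : (Fin m₁ → R) →ₗ[R] Fin m₁ → R))).map
      (Ideal.Quotient.mk 𝔪) = 1 := by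
  have hsplit : (s₁ ∘ₗ e ∘ₗ p₁ + LinearMap.id - s₁ ∘ₗ p₁ : (Fin m₁ → R) →ₗ[R] Fin m₁ → R)
      = s₁ ∘ₗ (e - LinearMap.id) ∘ₗ p₁ + LinearMap.id := by
    apply LinearMap.ext; intro z
    simp only [LinearMap.sub_apply, LinearMap.add_apply, LinearMap.comp_apply,
      LinearMap.id_apply, map_sub]
    abel
  rw [hsplit, map_add, LinearMap.toMatrix'_id]
  ext i j
  have hD : Ideal.Quotient.mk 𝔪
      ((LinearMap.toMatrix' (s₁ ∘ₗ (e - LinearMap.id) ∘ₗ p₁)) i j) = 0 := by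
    rw [Ideal.Quotient.eq_zero_iff_mem, LinearMap.toMatrix'_apply]
    have hrw : (s₁ ∘ₗ (e - LinearMap.id) ∘ₗ p₁) (Pi.single j 1)
        = s₁ (e (p₁ (Pi.single j 1))
            - p₁ (Pi.single j 1)) := by
      simp [LinearMap.comp_apply]
    rw [hrw]
    exact coord_mem_of_mem_smul_top 𝔪 (map_mem_smul_top s₁ 𝔪 (he _)) i
  rw [Matrix.map_apply, Matrix.add_apply, map_add, hD, zero_add]
  by_cases hij : i = j <;> simp [Matrix.one_apply, hij]

lemma tau_surj_ker (𝔪 : Ideal R) (M : Type*) [AddCommGroup M] [Module R M] :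
    Function.Surjective ((TensorProduct.mk R (R ⧸ 𝔪) M) 1) ∧
    ∀ x : M, (TensorProduct.mk R (R ⧸ 𝔪) M) 1 x = 0 → x ∈ (𝔪 • ⊤ : Submodule R M) := by
  have he : ∀ x : M, (quotTensorEquivQuotSMul M 𝔪) ((TensorProduct.mk R (R ⧸ 𝔪) M) 1 x)
      = Submodule.Quotient.mk x := by
    intro x
    simpa using quotTensorEquivQuotSMul_mk_tmul 𝔪 1 x
  constructor
  · intro y
    obtain ⟨x, hx⟩ := Submodule.Quotient.mk_surjective _ ((quotTensorEquivQuotSMul M 𝔪) y)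
    exact ⟨x, (quotTensorEquivQuotSMul M 𝔪).injective (by rw [he, hx])⟩
  · intro x hx
    have h0 := he x
    rw [hx, map_zero] at h0
    exact (Submodule.Quotient.mk_eq_zero _).mp h0.symm

end K2

set_option maxHeartbeats 1600000 in
theorem key_iso {R : Type*} [CommRing R] (hR : IsLGRing R)
    (M₁ M₂ : Type*) [AddCommGroup M₁] [Module R M₁] [AddCommGroup M₂] [Module R M₂]
    [Module.Finite R M₁] [Module.Projective R M₁] [Module.Finite R M₂] [Module.Projective R M₂]
    (hres : ∀ 𝔪 : Ideal R, 𝔪.IsMaximal →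
      Nonempty (((R ⧸ 𝔪) ⊗[R] M₁) ≃ₗ[R ⧸ 𝔪] ((R ⧸ 𝔪) ⊗[R] M₂))) :
    Nonempty (M₁ ≃ₗ[R] M₂) := by
  classical
  obtain ⟨m₁, p₁, hp₁⟩ := Module.Finite.exists_fin' R M₁
  obtain ⟨m₂, p₂, hp₂⟩ := Module.Finite.exists_fin' R M₂
  obtain ⟨s₁, hs₁⟩ := Module.projective_lifting_property p₁ LinearMap.id hp₁
  obtain ⟨s₂, hs₂⟩ := Module.projective_lifting_property p₂ LinearMap.id hp₂
  have hps₁ : ∀ x, p₁ (s₁ x) = x := fun x => by simpa using LinearMap.congr_fun hs₁ x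
  have hps₂ : ∀ x, p₂ (s₂ x) = x := fun x => by simpa using LinearMap.congr_fun hs₂ x
  set Q₁ : Matrix (Fin m₁) (Fin m₁) R := LinearMap.toMatrix' (s₁ ∘ₗ p₁) with hQ₁
  set Q₂ : Matrix (Fin m₂) (Fin m₂) R := LinearMap.toMatrix' (s₂ ∘ₗ p₂) with hQ₂
  set χ : MvPolynomial ((Fin m₂ × Fin m₁) ⊕ (Fin m₁ × Fin m₂)) R :=
      ((Q₁.map (MvPolynomial.C (σ := (Fin m₂ × Fin m₁) ⊕ (Fin m₁ × Fin m₂)) (R := R)) *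
          (Matrix.of fun i j =>
            (MvPolynomial.X (Sum.inr (i, j)) :
              MvPolynomial ((Fin m₂ × Fin m₁) ⊕ (Fin m₁ × Fin m₂)) R)) *
          Q₂.map (MvPolynomial.C (σ := (Fin m₂ × Fin m₁) ⊕ (Fin m₁ × Fin m₂)) (R := R)) *
          (Matrix.of fun i j =>
            (MvPolynomial.X (Sum.inl (i, j)) :
              MvPolynomial ((Fin m₂ × Fin m₁) ⊕ (Fin m₁ × Fin m₂)) R)) *
          Q₁.map (MvPolynomial.C (σ := (Fin m₂ × Fin m₁) ⊕ (Fin m₁ × Fin m₂)) (R := R)) + 1 -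
          Q₁.map (MvPolynomial.C (σ := (Fin m₂ × Fin m₁) ⊕ (Fin m₁ × Fin m₂)) (R := R))).det *
       (Q₂.map (MvPolynomial.C (σ := (Fin m₂ × Fin m₁) ⊕ (Fin m₁ × Fin m₂)) (R := R)) *
          (Matrix.of fun i j =>
            (MvPolynomial.X (Sum.inl (i, j)) :
              MvPolynomial ((Fin m₂ × Fin m₁) ⊕ (Fin m₁ × Fin m₂)) R)) *
          Q₁.map (MvPolynomial.C (σ := (Fin m₂ × Fin m₁) ⊕ (Fin m₁ × Fin m₂)) (R := R)) *
          (Matrix.of fun i j =>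
            (MvPolynomial.X (Sum.inr (i, j)) :
              MvPolynomial ((Fin m₂ × Fin m₁) ⊕ (Fin m₁ × Fin m₂)) R)) *
          Q₂.map (MvPolynomial.C (σ := (Fin m₂ × Fin m₁) ⊕ (Fin m₁ × Fin m₂)) (R := R)) + 1 -
          Q₂.map (MvPolynomial.C (σ := (Fin m₂ × Fin m₁) ⊕ (Fin m₁ × Fin m₂)) (R := R))).det)
      with hχ
  set g : ((Fin m₂ × Fin m₁) ⊕ (Fin m₁ × Fin m₂)) →
      Fin (Fintype.card ((Fin m₂ × Fin m₁) ⊕ (Fin m₁ × Fin m₂)) + 1) :=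
    Fin.castSucc ∘ (Fintype.equivFin ((Fin m₂ × Fin m₁) ⊕ (Fin m₁ × Fin m₂))) with hgdef
  have hg : Function.Injective g :=
    (Fin.castSucc_injective _).comp (Fintype.equivFin _).injective
  -- local solvability of the renamed polynomial
  have hloc : ∀ 𝔪 : Ideal R, 𝔪.IsMaximal →
      ∃ v, IsUnit (MvPolynomial.eval v
        (MvPolynomial.map (Ideal.Quotient.mk 𝔪) (MvPolynomial.rename g χ))) := by
    intro 𝔪 h𝔪
    obtain ⟨α⟩ := hres 𝔪 h𝔪
    obtain ⟨hsurj₁, hker₁⟩ := tau_surj_ker 𝔪 M₁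
    obtain ⟨hsurj₂, hker₂⟩ := tau_surj_ker 𝔪 M₂
    obtain ⟨h, hh⟩ := Module.projective_lifting_property ((TensorProduct.mk R (R ⧸ 𝔪) M₂) 1)
      ((α.toLinearMap.restrictScalars R) ∘ₗ (TensorProduct.mk R (R ⧸ 𝔪) M₁) 1) hsurj₂
    obtain ⟨h', hh'⟩ := Module.projective_lifting_property ((TensorProduct.mk R (R ⧸ 𝔪) M₁) 1)
      ((α.symm.toLinearMap.restrictScalars R) ∘ₗ (TensorProduct.mk R (R ⧸ 𝔪) M₂) 1) hsurj₁
    have hδ₁ : ∀ x : M₁, h' (h x) - x ∈ (𝔪 • ⊤ : Submodule R M₁) := by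
      intro x
      apply hker₁
      have e1 := LinearMap.congr_fun hh x
      have e2 := LinearMap.congr_fun hh' (h x)
      simp only [LinearMap.comp_apply, LinearMap.coe_restrictScalars,
        LinearEquiv.coe_coe] at e1 e2
      rw [map_sub, e2, e1, LinearEquiv.symm_apply_apply, sub_self]
    have hδ₂ : ∀ y : M₂, h (h' y) - y ∈ (𝔪 • ⊤ : Submodule R M₂) := by
      intro y
      apply hker₂
      have e1 := LinearMap.congr_fun hh' y
      have e2 := LinearMap.congr_fun hh (h' y)
      simp only [LinearMap.comp_apply, LinearMap.coe_restrictScalars,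
        LinearEquiv.coe_coe] at e1 e2
      rw [map_sub, e2, e1, LinearEquiv.apply_symm_apply, sub_self]
    set xR : Matrix (Fin m₂) (Fin m₁) R := LinearMap.toMatrix' (s₂ ∘ₗ h ∘ₗ p₁) with hxR
    set yR : Matrix (Fin m₁) (Fin m₂) R := LinearMap.toMatrix' (s₁ ∘ₗ h' ∘ₗ p₂) with hyR
    set v : ((Fin m₂ × Fin m₁) ⊕ (Fin m₁ × Fin m₂)) → R ⧸ 𝔪 :=
      fun t => Ideal.Quotient.mk 𝔪
        (Sum.elim (fun q : Fin m₂ × Fin m₁ => xR q.1 q.2)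
          (fun q : Fin m₁ × Fin m₂ => yR q.1 q.2) t) with hv
    refine ⟨Function.extend g v 0, ?_⟩
    have hvg : (Function.extend g v 0) ∘ g = v := by
      funext t
      exact hg.extend_apply v 0 t
    rw [MvPolynomial.map_rename, MvPolynomial.eval_rename, hvg, MvPolynomial.eval_map, hχ,
      eval₂_detExpr]
    have hmx : (Matrix.of fun i j => v (Sum.inl (i, j))) = xR.map (Ideal.Quotient.mk 𝔪) := by
      ext i j; simp [hv, Matrix.map_apply]
    have hmy : (Matrix.of fun i j => v (Sum.inr (i, j))) = yR.map (Ideal.Quotient.mk 𝔪) := by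
      ext i j; simp [hv, Matrix.map_apply]
    rw [hmx, hmy, ← map_detExpr (Ideal.Quotient.mk 𝔪) Q₁ Q₂ xR yR, map_mul,
      RingHom.map_det, RingHom.map_det, RingHom.mapMatrix_apply, RingHom.mapMatrix_apply,
      hxR, hyR, ← EB_matrix s₁ p₁ hps₁ s₂ p₂ hps₂ h h', ← EB_matrix s₂ p₂ hps₂ s₁ p₁ hps₁ h' h,
      toMatrix_E_map_eq_one 𝔪 s₁ p₁ (h' ∘ₗ h) (fun x => by simpa using hδ₁ x),
      toMatrix_E_map_eq_one 𝔪 s₂ p₂ (h ∘ₗ h') (fun y => by simpa using hδ₂ y)]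
    simp
  obtain ⟨u, hu⟩ := hR _ (Nat.le_add_left 1 _) (MvPolynomial.rename g χ) hloc
  rw [MvPolynomial.eval_rename] at hu
  have hueval : MvPolynomial.eval (u ∘ g) χ = MvPolynomial.eval₂ (RingHom.id R) (u ∘ g) χ :=
    (MvPolynomial.eval₂_id _).symm
  rw [hueval, hχ, eval₂_detExpr] at hu
  set xu : Matrix (Fin m₂) (Fin m₁) R := Matrix.of fun i j => (u ∘ g) (Sum.inl (i, j)) with hxu
  set yu : Matrix (Fin m₁) (Fin m₂) R := Matrix.of fun i j => (u ∘ g) (Sum.inr (i, j)) with hyu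
  set φ : M₁ →ₗ[R] M₂ := p₂ ∘ₗ Matrix.toLin' xu ∘ₗ s₁ with hφ
  set ψ : M₂ →ₗ[R] M₁ := p₁ ∘ₗ Matrix.toLin' yu ∘ₗ s₂ with hψ
  -- identify the matrices from hu with toMatrix' of the E-maps
  have hidem₁ : Q₁ * Q₁ = Q₁ := by
    rw [hQ₁, ← LinearMap.toMatrix'_comp]
    congr 1
    exact LinearMap.ext fun z => by simp [LinearMap.comp_apply, hps₁]
  have hidem₂ : Q₂ * Q₂ = Q₂ := by
    rw [hQ₂, ← LinearMap.toMatrix'_comp]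
    congr 1
    exact LinearMap.ext fun z => by simp [LinearMap.comp_apply, hps₂]
  have habs₁ : ∀ {k : ℕ} (A : Matrix (Fin k) (Fin m₁) R), A * Q₁ * Q₁ = A * Q₁ := by
    intro k A; rw [Matrix.mul_assoc, hidem₁]
  have habs₂ : ∀ {k : ℕ} (A : Matrix (Fin k) (Fin m₂) R), A * Q₂ * Q₂ = A * Q₂ := by
    intro k A; rw [Matrix.mul_assoc, hidem₂]
  have hxφ : LinearMap.toMatrix' (s₂ ∘ₗ φ ∘ₗ p₁) = Q₂ * xu * Q₁ := by
    have hre : s₂ ∘ₗ φ ∘ₗ p₁ = (s₂ ∘ₗ p₂) ∘ₗ (Matrix.toLin' xu ∘ₗ (s₁ ∘ₗ p₁)) := by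
      apply LinearMap.ext; intro z; simp [hφ, LinearMap.comp_apply]
    rw [hre, LinearMap.toMatrix'_comp, LinearMap.toMatrix'_comp, LinearMap.toMatrix'_toLin',
      ← hQ₁, ← hQ₂, Matrix.mul_assoc]
  have hyψ : LinearMap.toMatrix' (s₁ ∘ₗ ψ ∘ₗ p₂) = Q₁ * yu * Q₂ := by
    have hre : s₁ ∘ₗ ψ ∘ₗ p₂ = (s₁ ∘ₗ p₁) ∘ₗ (Matrix.toLin' yu ∘ₗ (s₂ ∘ₗ p₂)) := by
      apply LinearMap.ext; intro z; simp [hψ, LinearMap.comp_apply]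
    rw [hre, LinearMap.toMatrix'_comp, LinearMap.toMatrix'_comp, LinearMap.toMatrix'_toLin',
      ← hQ₁, ← hQ₂, Matrix.mul_assoc]
  have hE₁ : LinearMap.toMatrix'
      ((s₁ ∘ₗ (ψ ∘ₗ φ) ∘ₗ p₁ + LinearMap.id - s₁ ∘ₗ p₁ : (Fin m₁ → R) →ₗ[R] Fin m₁ → R))
      = Q₁ * yu * Q₂ * xu * Q₁ + 1 - Q₁ := by
    rw [EB_matrix s₁ p₁ hps₁ s₂ p₂ hps₂ φ ψ, hxφ, hyψ, ← hQ₁, ← hQ₂]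
    congr 2
    calc Q₁ * (Q₁ * yu * Q₂) * Q₂ * (Q₂ * xu * Q₁) * Q₁
        = Q₁ * Q₁ * yu * Q₂ * Q₂ * Q₂ * xu * Q₁ * Q₁ := by
          simp only [Matrix.mul_assoc]
      _ = Q₁ * yu * Q₂ * xu * Q₁ := by
          rw [hidem₁, habs₂ (Q₁ * yu), habs₂ (Q₁ * yu), habs₁ (Q₁ * yu * Q₂ * xu)]
  have hE₂ : LinearMap.toMatrix'
      ((s₂ ∘ₗ (φ ∘ₗ ψ) ∘ₗ p₂ + LinearMap.id - s₂ ∘ₗ p₂ : (Fin m₂ → R) →ₗ[R] Fin m₂ → R))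
      = Q₂ * xu * Q₁ * yu * Q₂ + 1 - Q₂ := by
    rw [EB_matrix s₂ p₂ hps₂ s₁ p₁ hps₁ ψ φ, hxφ, hyψ, ← hQ₁, ← hQ₂]
    congr 2
    calc Q₂ * (Q₂ * xu * Q₁) * Q₁ * (Q₁ * yu * Q₂) * Q₂
        = Q₂ * Q₂ * xu * Q₁ * Q₁ * Q₁ * yu * Q₂ * Q₂ := by
          simp only [Matrix.mul_assoc]
      _ = Q₂ * xu * Q₁ * yu * Q₂ := by
          rw [hidem₂, habs₁ (Q₂ * xu), habs₁ (Q₂ * xu), habs₂ (Q₂ * xu * Q₁ * yu)]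
  have hd₁ : IsUnit (LinearMap.toMatrix'
      ((s₁ ∘ₗ (ψ ∘ₗ φ) ∘ₗ p₁ + LinearMap.id - s₁ ∘ₗ p₁ : (Fin m₁ → R) →ₗ[R] Fin m₁ → R))).det := by
    rw [hE₁]; exact isUnit_of_mul_isUnit_left hu
  have hd₂ : IsUnit (LinearMap.toMatrix'
      ((s₂ ∘ₗ (φ ∘ₗ ψ) ∘ₗ p₂ + LinearMap.id - s₂ ∘ₗ p₂ : (Fin m₂ → R) →ₗ[R] Fin m₂ → R))).det := by
    rw [hE₂]; exact isUnit_of_mul_isUnit_right hu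
  -- invert and apply the E-trick
  have hbij₁ : Function.Bijective (ψ ∘ₗ φ) := by
    set E := (s₁ ∘ₗ (ψ ∘ₗ φ) ∘ₗ p₁ + LinearMap.id - s₁ ∘ₗ p₁ : (Fin m₁ → R) →ₗ[R] Fin m₁ → R)
      with hEdef
    have hCE : (LinearMap.toMatrix' E)⁻¹ * LinearMap.toMatrix' E = 1 :=
      Matrix.nonsing_inv_mul _ hd₁
    have hEC : LinearMap.toMatrix' E * (LinearMap.toMatrix' E)⁻¹ = 1 :=
      Matrix.mul_nonsing_inv _ hd₁
    refine bijective_of_E s₁ p₁ hps₁ (ψ ∘ₗ φ) (Matrix.toLin' (LinearMap.toMatrix' E)⁻¹) ?_ ?_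
    · intro z
      have : E z = Matrix.toLin' (LinearMap.toMatrix' E) z := by
        rw [Matrix.toLin'_toMatrix']
      rw [← hEdef, this, ← Matrix.toLin'_mul_apply, hCE, Matrix.toLin'_one, LinearMap.id_apply]
    · intro z
      have h3 : ∀ y, E y = Matrix.toLin' (LinearMap.toMatrix' E) y := fun y => by
        rw [Matrix.toLin'_toMatrix']
      rw [← hEdef, h3, ← Matrix.toLin'_mul_apply, hEC, Matrix.toLin'_one, LinearMap.id_apply]
  have hbij₂ : Function.Bijective (φ ∘ₗ ψ) := by
    set E := (s₂ ∘ₗ (φ ∘ₗ ψ) ∘ₗ p₂ + LinearMap.id - s₂ ∘ₗ p₂ : (Fin m₂ → R) →ₗ[R] Fin m₂ → R)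
      with hEdef
    have hCE : (LinearMap.toMatrix' E)⁻¹ * LinearMap.toMatrix' E = 1 :=
      Matrix.nonsing_inv_mul _ hd₂
    have hEC : LinearMap.toMatrix' E * (LinearMap.toMatrix' E)⁻¹ = 1 :=
      Matrix.mul_nonsing_inv _ hd₂
    refine bijective_of_E s₂ p₂ hps₂ (φ ∘ₗ ψ) (Matrix.toLin' (LinearMap.toMatrix' E)⁻¹) ?_ ?_
    · intro z
      have : E z = Matrix.toLin' (LinearMap.toMatrix' E) z := by
        rw [Matrix.toLin'_toMatrix']
      rw [← hEdef, this, ← Matrix.toLin'_mul_apply, hCE, Matrix.toLin'_one, LinearMap.id_apply]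
    · intro z
      have h3 : ∀ y, E y = Matrix.toLin' (LinearMap.toMatrix' E) y := fun y => by
        rw [Matrix.toLin'_toMatrix']
      rw [← hEdef, h3, ← Matrix.toLin'_mul_apply, hEC, Matrix.toLin'_one, LinearMap.id_apply]
  have hinj : Function.Injective φ := by
    intro a b hab
    apply hbij₁.injective
    simp only [LinearMap.comp_apply]
    rw [hab]
  have hsurj : Function.Surjective φ := by
    intro y
    obtain ⟨z, hz⟩ := hbij₂.surjective y
    exact ⟨ψ z, by simpa [LinearMap.comp_apply] using hz⟩
  exact ⟨LinearEquiv.ofBijective φ ⟨hinj, hsurj⟩⟩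

attribute [local instance] Ideal.Quotient.field

set_option maxHeartbeats 1600000 in
/-- (Cancellation of modules.)  Over an LG-ring `R`, if `M₁`, `M₂` are
finitely generated projective modules and `N` is a faithfully projective module, then
`M₁ ⊗ N ≅ M₂ ⊗ N` implies `M₁ ≅ M₂`; in particular `M₁^{⊕n} ≅ M₂^{⊕n}` (`n ≥ 1`)
implies `M₁ ≅ M₂`. -/
theorem lg_ring_tensor_cancellation
    {R : Type*} [CommRing R] (hR : IsLGRing R)
    (M₁ M₂ N : Type*) [AddCommGroup M₁] [Module R M₁] [AddCommGroup M₂] [Module R M₂]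
    [AddCommGroup N] [Module R N]
    [Module.Finite R M₁] [Module.Projective R M₁]
    [Module.Finite R M₂] [Module.Projective R M₂]
    [Module.Finite R N] [Module.Projective R N] [FaithfulSMul R N] :
    (Nonempty ((M₁ ⊗[R] N) ≃ₗ[R] (M₂ ⊗[R] N)) → Nonempty (M₁ ≃ₗ[R] M₂)) ∧
    (∀ n : ℕ, 1 ≤ n →
      Nonempty ((Fin n → M₁) ≃ₗ[R] (Fin n → M₂)) → Nonempty (M₁ ≃ₗ[R] M₂)) := by
  have hNtriv : ∀ (𝔪 : Ideal R), 𝔪.IsMaximal → Nontrivial ((R ⧸ 𝔪) ⊗[R] N) := by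
    intro 𝔪 h𝔪
    by_contra hcon
    rw [not_nontrivial_iff_subsingleton] at hcon
    haveI := hcon
    have hsub : Subsingleton (N ⧸ (𝔪 • ⊤ : Submodule R N)) :=
      (quotTensorEquivQuotSMul N 𝔪).symm.toEquiv.subsingleton
    have htop : (𝔪 • ⊤ : Submodule R N) = ⊤ :=
      Submodule.Quotient.subsingleton_iff.mp hsub
    obtain ⟨r, hr1, hr0⟩ :=
      Submodule.exists_sub_one_mem_and_smul_eq_zero_of_fg_of_le_smul 𝔪 ⊤
        (Module.finite_def.mp ‹Module.Finite R N›) (le_of_eq htop.symm)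
    have hr : r = 0 := by
      refine FaithfulSMul.eq_of_smul_eq_smul (α := N) fun x => ?_
      rw [zero_smul]
      exact hr0 x Submodule.mem_top
    rw [hr] at hr1
    have h1m : (1 : R) ∈ 𝔪 := by simpa using 𝔪.neg_mem hr1
    exact h𝔪.ne_top ((Ideal.eq_top_iff_one 𝔪).mpr h1m)
  constructor
  · rintro ⟨α⟩
    refine key_iso hR M₁ M₂ ?_
    intro 𝔪 h𝔪
    haveI := h𝔪
    haveI := hNtriv 𝔪 h𝔪
    let e₁ : (((R ⧸ 𝔪) ⊗[R] M₁) ⊗[R ⧸ 𝔪] ((R ⧸ 𝔪) ⊗[R] N)) ≃ₗ[R ⧸ 𝔪]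
        (R ⧸ 𝔪) ⊗[R] (M₁ ⊗[R] N) :=
      (TensorProduct.AlgebraTensorModule.cancelBaseChange R (R ⧸ 𝔪) (R ⧸ 𝔪)
          ((R ⧸ 𝔪) ⊗[R] M₁) N) ≪≫ₗ
        (TensorProduct.AlgebraTensorModule.assoc R R (R ⧸ 𝔪) (R ⧸ 𝔪) M₁ N)
    let e₂ : (((R ⧸ 𝔪) ⊗[R] M₂) ⊗[R ⧸ 𝔪] ((R ⧸ 𝔪) ⊗[R] N)) ≃ₗ[R ⧸ 𝔪]
        (R ⧸ 𝔪) ⊗[R] (M₂ ⊗[R] N) :=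
      (TensorProduct.AlgebraTensorModule.cancelBaseChange R (R ⧸ 𝔪) (R ⧸ 𝔪)
          ((R ⧸ 𝔪) ⊗[R] M₂) N) ≪≫ₗ
        (TensorProduct.AlgebraTensorModule.assoc R R (R ⧸ 𝔪) (R ⧸ 𝔪) M₂ N)
    let γ : (((R ⧸ 𝔪) ⊗[R] M₁) ⊗[R ⧸ 𝔪] ((R ⧸ 𝔪) ⊗[R] N)) ≃ₗ[R ⧸ 𝔪]
        (((R ⧸ 𝔪) ⊗[R] M₂) ⊗[R ⧸ 𝔪] ((R ⧸ 𝔪) ⊗[R] N)) :=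
      e₁ ≪≫ₗ (α.baseChange R (R ⧸ 𝔪) _ _) ≪≫ₗ e₂.symm
    have hfr := γ.finrank_eq
    have h1 : Module.finrank (R ⧸ 𝔪) (((R ⧸ 𝔪) ⊗[R] M₁) ⊗[R ⧸ 𝔪] ((R ⧸ 𝔪) ⊗[R] N))
        = Module.finrank (R ⧸ 𝔪) ((R ⧸ 𝔪) ⊗[R] M₁) * Module.finrank (R ⧸ 𝔪) ((R ⧸ 𝔪) ⊗[R] N) :=
      Module.finrank_tensorProduct
    have h2 : Module.finrank (R ⧸ 𝔪) (((R ⧸ 𝔪) ⊗[R] M₂) ⊗[R ⧸ 𝔪] ((R ⧸ 𝔪) ⊗[R] N))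
        = Module.finrank (R ⧸ 𝔪) ((R ⧸ 𝔪) ⊗[R] M₂) * Module.finrank (R ⧸ 𝔪) ((R ⧸ 𝔪) ⊗[R] N) :=
      Module.finrank_tensorProduct
    rw [h1, h2] at hfr
    have hpos : 0 < Module.finrank (R ⧸ 𝔪) ((R ⧸ 𝔪) ⊗[R] N) := Module.finrank_pos
    exact FiniteDimensional.nonempty_linearEquiv_of_finrank_eq
      (Nat.eq_of_mul_eq_mul_right hpos hfr)
  · rintro n hn ⟨γ0⟩
    refine key_iso hR M₁ M₂ ?_
    intro 𝔪 h𝔪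
    haveI := h𝔪
    let γ : (Fin n → ((R ⧸ 𝔪) ⊗[R] M₁)) ≃ₗ[R ⧸ 𝔪] (Fin n → ((R ⧸ 𝔪) ⊗[R] M₂)) :=
      (TensorProduct.piRight R (R ⧸ 𝔪) (R ⧸ 𝔪) (fun _ : Fin n => M₁)).symm ≪≫ₗ
        (γ0.baseChange R (R ⧸ 𝔪) _ _) ≪≫ₗ
        (TensorProduct.piRight R (R ⧸ 𝔪) (R ⧸ 𝔪) (fun _ : Fin n => M₂))
    have hfr := γ.finrank_eq
    rw [Module.finrank_pi_fintype, Module.finrank_pi_fintype] at hfr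
    simp only [Finset.sum_const, Finset.card_univ, Fintype.card_fin, smul_eq_mul] at hfr
    exact FiniteDimensional.nonempty_linearEquiv_of_finrank_eq
      (Nat.eq_of_mul_eq_mul_left (by omega) hfr)
end

section
/- Let R be an LG-ring and let M₁, M₂ and N be finitely generated projective R-modules. If M₁ ⊕ N and M₂ ⊕ N are isomorphic as R-modules, then M₁ and M₂ are isomorphic as R-modules. -/
section Aux

variable {R : Type*} [CommRing R]

/-- Key lemma: over an LG-ring, if `(m, r)` is a unimodular pair in `M × R`
(witnessed by `g m + s * r = 1`), then there is a functional `h` with `r + h m` a unit. -/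
theorem IsLGRing.exists_unit_add {M : Type*} [AddCommGroup M] [Module R M]
    [Module.Finite R M] [Module.Projective R M] (hR : IsLGRing R)
    (m : M) (r : R) (g : M →ₗ[R] R) (s : R) (hgs : g m + s * r = 1) :
    ∃ h : M →ₗ[R] R, IsUnit (r + h m) := by
  classical
  obtain ⟨k, p, hp⟩ := Module.Finite.exists_fin' R M
  obtain ⟨i, hi⟩ := Module.projective_lifting_property p LinearMap.id hp
  have hpi : ∀ x : M, p (i x) = x := fun x => by
    simpa using LinearMap.congr_fun hi x
  -- coefficients
  set δ : Fin k → (Fin k → R) := fun j j' => if j = j' then 1 else 0 with hδ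
  set c : Fin (k + 1) → R := Fin.snoc (fun j => i m j) 0 with hc
  set a : Fin (k + 1) → R := Fin.snoc (fun j => g (p (δ j))) 0 with ha
  have key : (∑ j : Fin (k + 1), c j * a j) + s * r = 1 := by
    have h1 : g m = ∑ j : Fin k, (i m) j * g (p (δ j)) := by
      have := LinearMap.pi_apply_eq_sum_univ (g.comp p) (i m)
      simpa [hpi m, smul_eq_mul, hδ] using this
    have h2 : (∑ j : Fin (k + 1), c j * a j)
        = ∑ j : Fin k, (i m) j * g (p (δ j)) := by
      rw [Fin.sum_univ_castSucc]
      simp [hc, ha, Fin.snoc_castSucc, Fin.snoc_last]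
    rw [h2, ← h1]; exact hgs
  -- the polynomial
  set f : MvPolynomial (Fin (k + 1)) R :=
    MvPolynomial.C r + ∑ j : Fin (k + 1), MvPolynomial.X j * MvPolynomial.C (c j) with hf
  have heval : ∀ u : Fin (k + 1) → R,
      MvPolynomial.eval u f = r + ∑ j : Fin (k + 1), u j * c j := by
    intro u; simp [hf]
  have hres : ∀ 𝔪 : Ideal R, 𝔪.IsMaximal →
      ∃ v : Fin (k + 1) → R ⧸ 𝔪, IsUnit (MvPolynomial.eval v
        (MvPolynomial.map (Ideal.Quotient.mk 𝔪) f)) := by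
    intro 𝔪 hm
    haveI := hm
    letI : Field (R ⧸ 𝔪) := Ideal.Quotient.field 𝔪
    set q := Ideal.Quotient.mk 𝔪 with hq
    have hevalq : ∀ v : Fin (k + 1) → R ⧸ 𝔪,
        MvPolynomial.eval v (MvPolynomial.map q f)
          = q r + ∑ j : Fin (k + 1), v j * q (c j) := by
      intro v; simp [hf]
    by_cases hzero : ∀ j : Fin (k + 1), q (c j) = 0
    · refine ⟨0, ?_⟩
      rw [hevalq]
      have : q s * q r = 1 := by
        have := congrArg q key
        simpa [map_add, map_mul, map_sum, hzero] using this
      have : IsUnit (q r) := IsUnit.of_mul_eq_one _ (by rw [mul_comm]; exact this)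
      simpa using this
    · push_neg at hzero
      obtain ⟨j₀, hj₀⟩ := hzero
      refine ⟨Pi.single j₀ ((1 - q r) * (q (c j₀))⁻¹), ?_⟩
      rw [hevalq]
      have hsum : (∑ j : Fin (k + 1),
          (Pi.single j₀ ((1 - q r) * (q (c j₀))⁻¹) : Fin (k + 1) → R ⧸ 𝔪) j * q (c j))
          = (Pi.single j₀ ((1 - q r) * (q (c j₀))⁻¹) : Fin (k + 1) → R ⧸ 𝔪) j₀
              * q (c j₀) := by
        refine Finset.sum_eq_single j₀ (fun b _ hb => ?_)
          (fun hj => absurd (Finset.mem_univ j₀) hj)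
        simp [Pi.single_eq_of_ne hb]
      rw [hsum, Pi.single_eq_same, mul_assoc, inv_mul_cancel₀ hj₀, mul_one]
      simpa using isUnit_one
  obtain ⟨u, hu⟩ := hR (k + 1) (Nat.succ_le_succ (Nat.zero_le _)) f hres
  refine ⟨∑ j : Fin k, u j.castSucc • ((LinearMap.proj j).comp i), ?_⟩
  have hsum : (∑ j : Fin k, u j.castSucc • ((LinearMap.proj (R := R) j).comp i)) m
      = ∑ j : Fin (k + 1), u j * c j := by
    rw [Fin.sum_univ_castSucc (f := fun j => u j * c j)]
    simp [hc, Fin.snoc_castSucc, Fin.snoc_last, LinearMap.sum_apply, smul_eq_mul]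
  have hu' := hu
  rw [heval u, ← hsum] at hu'
  exact hu'

/-- Cancellation of a single free factor `R` over an LG-ring. -/
theorem IsLGRing.cancel_one (hR : IsLGRing R) {M₁ M₂ : Type*}
    [AddCommGroup M₁] [Module R M₁] [AddCommGroup M₂] [Module R M₂]
    [Module.Finite R M₁] [Module.Projective R M₁]
    (φ : (M₁ × R) ≃ₗ[R] (M₂ × R)) : Nonempty (M₁ ≃ₗ[R] M₂) := by
  classical
  set e : M₁ × R := φ.symm (0, 1) with he
  set m : M₁ := e.1 with hm
  set r : R := e.2 with hr
  set g : M₁ →ₗ[R] R :=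
    (LinearMap.snd R M₂ R).comp (φ.toLinearMap.comp (LinearMap.inl R M₁ R)) with hg
  set s : R := (φ (0, 1)).2 with hs
  have hφe : φ (m, r) = (0, 1) := by
    rw [hm, hr]
    simpa [he] using φ.apply_symm_apply (0, 1)
  have hgs : g m + s * r = 1 := by
    have hsplit : (m, r) = ((m, 0) : M₁ × R) + r • ((0, 1) : M₁ × R) := by
      simp [Prod.ext_iff]
    have h2 : ((0 : M₂), (1 : R)) = φ (m, 0) + r • φ (0, 1) := by
      rw [← map_smul, ← map_add, ← hsplit, hφe]
    have h3 := congrArg (fun z : M₂ × R => z.2) h2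
    simp only [Prod.snd_add, Prod.smul_snd, smul_eq_mul] at h3
    have hgm : g m = (φ (m, 0)).2 := by simp [hg, LinearMap.inl]
    rw [hgm, hs, mul_comm]
    exact h3.symm
  obtain ⟨h, hu⟩ := hR.exists_unit_add m r g s hgs
  obtain ⟨w, hw⟩ := hu
  -- transvection τ : (x, a) ↦ (x, a + h x)
  set τ : (M₁ × R) ≃ₗ[R] (M₁ × R) := LinearEquiv.ofLinear
    (LinearMap.prod (LinearMap.fst R M₁ R)
      ((LinearMap.snd R M₁ R) + h.comp (LinearMap.fst R M₁ R)))
    (LinearMap.prod (LinearMap.fst R M₁ R)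
      ((LinearMap.snd R M₁ R) - h.comp (LinearMap.fst R M₁ R)))
    (by
      apply LinearMap.ext
      rintro ⟨x, a⟩
      show ((x, (a - h x) + h x) : M₁ × R) = (x, a)
      refine Prod.ext rfl ?_
      exact sub_add_cancel a (h x))
    (by
      apply LinearMap.ext
      rintro ⟨x, a⟩
      show ((x, (a + h x) - h x) : M₁ × R) = (x, a)
      refine Prod.ext rfl ?_
      exact add_sub_cancel_right a (h x)) with hτ
  -- shear σ : (x, a) ↦ (x - a • (w⁻¹ • m), a)
  set c : M₁ := ((w⁻¹ : Rˣ) : R) • m with hcdef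
  set σ : (M₁ × R) ≃ₗ[R] (M₁ × R) := LinearEquiv.ofLinear
    (LinearMap.prod ((LinearMap.fst R M₁ R) - (LinearMap.snd R M₁ R).smulRight c)
      (LinearMap.snd R M₁ R))
    (LinearMap.prod ((LinearMap.fst R M₁ R) + (LinearMap.snd R M₁ R).smulRight c)
      (LinearMap.snd R M₁ R))
    (by
      apply LinearMap.ext
      rintro ⟨x, a⟩
      show (((x + a • c) - a • c, a) : M₁ × R) = (x, a)
      refine Prod.ext ?_ rfl
      exact add_sub_cancel_right x (a • c))
    (by
      apply LinearMap.ext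
      rintro ⟨x, a⟩
      show (((x - a • c) + a • c, a) : M₁ × R) = (x, a)
      refine Prod.ext ?_ rfl
      exact sub_add_cancel x (a • c)) with hσ
  -- scaling ρ : (x, a) ↦ (x, w⁻¹ * a)
  set ρ : (M₁ × R) ≃ₗ[R] (M₁ × R) := LinearEquiv.ofLinear
    (LinearMap.prod (LinearMap.fst R M₁ R) (((w⁻¹ : Rˣ) : R) • (LinearMap.snd R M₁ R)))
    (LinearMap.prod (LinearMap.fst R M₁ R) (((w : Rˣ) : R) • (LinearMap.snd R M₁ R)))
    (by
      apply LinearMap.ext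
      rintro ⟨x, a⟩
      show ((x, ((w⁻¹ : Rˣ) : R) • (((w : Rˣ) : R) • a)) : M₁ × R) = (x, a)
      refine Prod.ext rfl ?_
      rw [smul_smul, Units.inv_mul, one_smul])
    (by
      apply LinearMap.ext
      rintro ⟨x, a⟩
      show ((x, ((w : Rˣ) : R) • (((w⁻¹ : Rˣ) : R) • a)) : M₁ × R) = (x, a)
      refine Prod.ext rfl ?_
      rw [smul_smul, Units.mul_inv, one_smul]) with hρ
  set α : (M₁ × R) ≃ₗ[R] (M₁ × R) := τ.trans (σ.trans ρ) with hα
  have hτe : τ (m, r) = (m, (w : R)) := by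
    show (m, r + h m) = (m, (w : R))
    rw [hw]
  have hσe : σ (m, (w : R)) = (0, (w : R)) := by
    show (m - (w : R) • c, (w : R)) = ((0 : M₁), (w : R))
    rw [hcdef, smul_smul, Units.mul_inv, one_smul, sub_self]
  have hρe : ρ (0, (w : R)) = (0, 1) := by
    show ((0 : M₁), ((w⁻¹ : Rˣ) : R) • (w : R)) = ((0 : M₁), (1 : R))
    rw [smul_eq_mul, Units.inv_mul]
  have hαe : α (m, r) = (0, 1) := by
    show ρ (σ (τ (m, r))) = (0, 1)
    rw [hτe, hσe, hρe]
  set ψ : (M₁ × R) ≃ₗ[R] (M₂ × R) := α.symm.trans φ with hψdef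
  have hψ : ψ (0, 1) = (0, 1) := by
    have h4 : α.symm (0, 1) = (m, r) := by
      rw [← hαe, LinearEquiv.symm_apply_apply]
    show φ (α.symm (0, 1)) = (0, 1)
    rw [h4, hφe]
  set β : M₁ →ₗ[R] M₂ :=
    (LinearMap.fst R M₂ R).comp (ψ.toLinearMap.comp (LinearMap.inl R M₁ R)) with hβ
  have hβx : ∀ x : M₁, β x = (ψ (x, 0)).1 := fun x => rfl
  have key : ∀ (x : M₁) (t : R), ψ (x, t) = (β x, (ψ (x, 0)).2 + t) := by
    intro x t
    have hsplit : (x, t) = ((x, 0) : M₁ × R) + t • ((0, 1) : M₁ × R) := by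
      simp [Prod.ext_iff]
    rw [hsplit, map_add, map_smul, hψ]
    refine Prod.ext ?_ ?_
    · simp [hβx]
    · simp
  have hinj : Function.Injective β := by
    refine (injective_iff_map_eq_zero β).mpr ?_
    intro x hx
    have h0 : ψ (x, -(ψ (x, 0)).2) = 0 := by
      rw [key x _]
      simp [hx]
    have hx0 : (x, -(ψ (x, 0)).2) = (0 : M₁ × R) := by
      apply ψ.injective
      simpa using h0
    exact congrArg Prod.fst hx0
  have hsurj : Function.Surjective β := by
    intro y
    obtain ⟨z, hz⟩ : ∃ z : M₁ × R, ψ z = (y, 0) := ⟨ψ.symm (y, 0), ψ.apply_symm_apply _⟩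
    refine ⟨z.1, ?_⟩
    have := key z.1 z.2
    rw [Prod.mk.eta] at this
    rw [hz] at this
    exact (congrArg Prod.fst this).symm
  exact ⟨LinearEquiv.ofBijective β ⟨hinj, hsurj⟩⟩

/-- `(Fin (n+1) → R) ≃ₗ (Fin n → R) × R`. -/
def finSuccPiLEquiv (R : Type*) [Semiring R] (n : ℕ) :
    (Fin (n + 1) → R) ≃ₗ[R] (Fin n → R) × R where
  toFun f := (fun i => f i.succ, f 0)
  invFun p := Fin.cons p.2 p.1
  map_add' _ _ := rfl
  map_smul' _ _ := rfl
  left_inv f := Fin.cons_self_tail f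
  right_inv p := by
    refine Prod.ext ?_ ?_
    · funext i; simp [Fin.cons_succ]
    · simp [Fin.cons_zero]

/-- `M × (Fin 0 → R) ≃ₗ M`. -/
def prodFinZeroLEquiv (R M : Type*) [CommRing R] [AddCommGroup M] [Module R M] :
    (M × (Fin 0 → R)) ≃ₗ[R] M :=
  LinearEquiv.ofLinear (LinearMap.fst R M (Fin 0 → R))
    (LinearMap.inl R M (Fin 0 → R)) (by ext x; simp)
    (by
      apply LinearMap.ext
      rintro ⟨x, f⟩
      refine Prod.ext rfl ?_
      funext j
      exact j.elim0)

/-- `M × (Fin (n+1) → R) ≃ₗ (M × (Fin n → R)) × R`. -/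
def prodFinSuccLEquiv (R M : Type*) [CommRing R] [AddCommGroup M] [Module R M] (n : ℕ) :
    (M × (Fin (n + 1) → R)) ≃ₗ[R] ((M × (Fin n → R)) × R) :=
  ((LinearEquiv.refl R M).prodCongr (finSuccPiLEquiv R n)).trans
    (LinearEquiv.prodAssoc R M (Fin n → R) R).symm

/-- Cancellation of a finite free factor over an LG-ring. -/
theorem IsLGRing.cancel_fin (hR : IsLGRing R) {M₁ M₂ : Type*}
    [AddCommGroup M₁] [Module R M₁] [AddCommGroup M₂] [Module R M₂]
    [Module.Finite R M₁] [Module.Projective R M₁]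
    [Module.Finite R M₂] [Module.Projective R M₂] :
    ∀ n : ℕ, ((M₁ × (Fin n → R)) ≃ₗ[R] (M₂ × (Fin n → R))) → Nonempty (M₁ ≃ₗ[R] M₂) := by
  intro n
  induction n with
  | zero =>
    intro φ
    exact ⟨((prodFinZeroLEquiv R M₁).symm.trans φ).trans (prodFinZeroLEquiv R M₂)⟩
  | succ n ih =>
    intro φ
    have Φ : ((M₁ × (Fin n → R)) × R) ≃ₗ[R] ((M₂ × (Fin n → R)) × R) :=
      (prodFinSuccLEquiv R M₁ n).symm.trans (φ.trans (prodFinSuccLEquiv R M₂ n))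
    obtain ⟨ψ⟩ := hR.cancel_one Φ
    exact ih ψ

end Aux

/-- (Additive cancellation.)  Over an LG-ring `R`, if `M₁`, `M₂` and `N`
are finitely generated projective modules with `M₁ ⊕ N ≅ M₂ ⊕ N`, then `M₁ ≅ M₂`. -/
theorem lg_ring_direct_sum_cancellation
    {R : Type*} [CommRing R] (hR : IsLGRing R)
    (M₁ M₂ N : Type*) [AddCommGroup M₁] [Module R M₁] [AddCommGroup M₂] [Module R M₂]
    [AddCommGroup N] [Module R N]
    [Module.Finite R M₁] [Module.Projective R M₁]
    [Module.Finite R M₂] [Module.Projective R M₂]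
    [Module.Finite R N] [Module.Projective R N]
    (h : Nonempty ((M₁ × N) ≃ₗ[R] (M₂ × N))) :
    Nonempty (M₁ ≃ₗ[R] M₂) := by
  classical
  obtain ⟨n, p, hp⟩ := Module.Finite.exists_fin' R N
  obtain ⟨i, hi⟩ := Module.projective_lifting_property p LinearMap.id hp
  have hpi : ∀ x : N, p (i x) = x := fun x => by
    simpa using LinearMap.congr_fun hi x
  set K := LinearMap.ker p with hK
  have hker : ∀ x : Fin n → R, x - i (p x) ∈ K := by
    intro x
    simp [hK, LinearMap.mem_ker, map_sub, hpi]
  set E : (Fin n → R) ≃ₗ[R] (N × K) := LinearEquiv.ofLinear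
    (LinearMap.prod p ((LinearMap.id - i.comp p).codRestrict K hker))
    ((i.comp (LinearMap.fst R N K)) + (K.subtype.comp (LinearMap.snd R N K)))
    (by
      apply LinearMap.ext
      rintro ⟨y, k, hk⟩
      have hk0 : p k = 0 := hk
      refine Prod.ext ?_ (Subtype.ext ?_)
      · simp [hpi, hk0]
      · simp [hpi, hk0])
    (by
      apply LinearMap.ext
      intro x
      simp) with hE
  obtain ⟨φ⟩ := h
  have G : (M₁ × (Fin n → R)) ≃ₗ[R] (M₂ × (Fin n → R)) :=
    (((LinearEquiv.refl R M₁).prodCongr E).trans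
      ((LinearEquiv.prodAssoc R M₁ N K).symm.trans
        ((φ.prodCongr (LinearEquiv.refl R K)).trans
          ((LinearEquiv.prodAssoc R M₂ N K).trans
            ((LinearEquiv.refl R M₂).prodCongr E.symm)))))
  exact hR.cancel_fin n G
end

section
/- Let R be an LG-ring and let (M, q) be a nonsingular quadratic form over R (a quadratic space). Then the following are equivalent: (i) there exists m ∈ M with q(m) ∈ R^×; (ii) M is faithfully projective. -/
open TensorProduct

universe u v

/-- A quadratic form `q` on `M` is nonsingular if for every field `F` which is an
`R`-algebra, the base change `q_F` (the unique quadratic form on `F ⊗_R M` with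
`q_F(t ⊗ m) = t² q(m)` whose polar form is the base change of the polar form of `q`)
has trivial radical. -/
def IsNonsingularQF {R : Type u} {M : Type v} [CommRing R] [AddCommGroup M] [Module R M]
    (q : QuadraticForm R M) : Prop :=
  ∀ (F : Type u) [Field F] [Algebra R F],
    ∀ Q : QuadraticForm F (F ⊗[R] M),
      (∀ (t : F) (m : M), Q (t ⊗ₜ[R] m) = t ^ 2 * algebraMap R F (q m)) →
      (∀ (t t' : F) (m m' : M),
        QuadraticMap.polar Q (t ⊗ₜ[R] m) (t' ⊗ₜ[R] m') =
          t * t' * algebraMap R F (QuadraticMap.polar q m m')) →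
      ∀ z : F ⊗[R] M, Q z = 0 → (∀ w : F ⊗[R] M, QuadraticMap.polar Q z w = 0) → z = 0

open QuadraticMap

open TensorProduct QuadraticMap

section ResidueForm

variable {R : Type*} {M : Type*} [CommRing R] [AddCommGroup M] [Module R M]

lemma mem_smul_top_polar (q : QuadraticForm R M) (I : Ideal R) {x : M}
    (hx : x ∈ (I • ⊤ : Submodule R M)) :
    q x ∈ I ∧ ∀ y : M, polar q y x ∈ I := by
  refine Submodule.smul_induction_on hx ?_ ?_
  · intro r hr n _
    refine ⟨?_, fun y => ?_⟩
    · rw [QuadraticMap.map_smul, smul_eq_mul]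
      exact I.mul_mem_right _ (I.mul_mem_left _ hr)
    · rw [polar_smul_right, smul_eq_mul]
      exact I.mul_mem_right _ hr
  · intro a b ha hb
    refine ⟨?_, fun y => ?_⟩
    · have : q (a + b) = q a + q b + polar q a b := by
        rw [polar]; ring
      rw [this]
      refine I.add_mem (I.add_mem ha.1 hb.1) ?_
      rw [polar_comm]
      exact ha.2 b
    · rw [polar_add_right]
      exact I.add_mem (ha.2 y) (hb.2 y)

lemma resform_wd (q : QuadraticForm R M) (I : Ideal R) {a b : M}
    (h : a - b ∈ (I • ⊤ : Submodule R M)) :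
    Ideal.Quotient.mk I (q a) = Ideal.Quotient.mk I (q b) := by
  rw [Ideal.Quotient.eq]
  have h3 : q a - q b = q (a - b) + polar q b (a - b) := by
    have e : b + (a - b) = a := by abel
    rw [polar, e]; ring
  rw [h3]
  have hh := mem_smul_top_polar q I h
  exact I.add_mem hh.1 (hh.2 b)

lemma respolar_wd (q : QuadraticForm R M) (I : Ideal R) {a b a' b' : M}
    (h : a - b ∈ (I • ⊤ : Submodule R M)) (h' : a' - b' ∈ (I • ⊤ : Submodule R M)) :
    Ideal.Quotient.mk I (polar q a a') = Ideal.Quotient.mk I (polar q b b') := by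
  rw [Ideal.Quotient.eq]
  have e : polar q a a' - polar q b b' =
      polar q a' (a - b) + polar q b (a' - b') := by
    rw [polar_sub_right, polar_sub_right, polar_comm q a' a, polar_comm q a' b]
    ring
  rw [e]
  exact I.add_mem ((mem_smul_top_polar q I h).2 a') ((mem_smul_top_polar q I h').2 b)

variable (q : QuadraticForm R M) (I : Ideal R)

/-- The bilinear form on `M ⧸ I•⊤` over `R ⧸ I` descended from `polar q`. -/
noncomputable def resPolar :
    LinearMap.BilinMap (R ⧸ I) (M ⧸ (I • ⊤ : Submodule R M)) (R ⧸ I) := by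
  refine LinearMap.mk₂ (R ⧸ I)
    (fun v w => Quotient.liftOn₂' v w (fun m m' => Ideal.Quotient.mk I (polar q m m'))
      (fun a₁ a₂ b₁ b₂ h1 h2 => respolar_wd q I
        ((Submodule.quotientRel_def _).mp h1) ((Submodule.quotientRel_def _).mp h2)))
    ?_ ?_ ?_ ?_
  · intro x x' y
    induction x using Quotient.inductionOn' with | h a =>
    induction x' using Quotient.inductionOn' with | h a' =>
    induction y using Quotient.inductionOn' with | h b =>
    show Ideal.Quotient.mk I (polar q (a + a') b) = _
    rw [polar_add_left, map_add]; rfl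
  · intro c x y
    obtain ⟨r, rfl⟩ := Ideal.Quotient.mk_surjective c
    induction x using Quotient.inductionOn' with | h a =>
    induction y using Quotient.inductionOn' with | h b =>
    show Ideal.Quotient.mk I (polar q (r • a) b) = _
    rw [polar_smul_left, smul_eq_mul, map_mul]; rfl
  · intro x y y'
    induction x using Quotient.inductionOn' with | h a =>
    induction y using Quotient.inductionOn' with | h b =>
    induction y' using Quotient.inductionOn' with | h b' =>
    show Ideal.Quotient.mk I (polar q a (b + b')) = _
    rw [polar_add_right, map_add]; rfl
  · intro c x y
    obtain ⟨r, rfl⟩ := Ideal.Quotient.mk_surjective c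
    induction x using Quotient.inductionOn' with | h a =>
    induction y using Quotient.inductionOn' with | h b =>
    show Ideal.Quotient.mk I (polar q a (r • b)) = _
    rw [polar_smul_right, smul_eq_mul, map_mul]; rfl

/-- The quadratic form on `M ⧸ I•⊤` over `R ⧸ I` descended from `q`. -/
noncomputable def resForm :
    QuadraticForm (R ⧸ I) (M ⧸ (I • ⊤ : Submodule R M)) where
  toFun v := Quotient.liftOn' v (fun m => Ideal.Quotient.mk I (q m))
    (fun a b h => resform_wd q I ((Submodule.quotientRel_def _).mp h))
  toFun_smul c v := by
    obtain ⟨r, rfl⟩ := Ideal.Quotient.mk_surjective c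
    induction v using Quotient.inductionOn' with | h a =>
    show Ideal.Quotient.mk I (q (r • a)) = _
    rw [QuadraticMap.map_smul, smul_eq_mul, smul_eq_mul, _root_.map_mul, _root_.map_mul]
    rfl
  exists_companion' := by
    refine ⟨resPolar q I, fun x y => ?_⟩
    induction x using Quotient.inductionOn' with | h a =>
    induction y using Quotient.inductionOn' with | h b =>
    show Ideal.Quotient.mk I (q (a + b)) =
      Ideal.Quotient.mk I (q a) + Ideal.Quotient.mk I (q b) + Ideal.Quotient.mk I (polar q a b)
    rw [← map_add, ← map_add]
    congr 1
    rw [polar]; ring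

@[simp] lemma resForm_mk (m : M) :
    resForm q I (Submodule.Quotient.mk m) = Ideal.Quotient.mk I (q m) := rfl

lemma resForm_polar_mk (m m' : M) :
    polar (resForm q I) (Submodule.Quotient.mk m) (Submodule.Quotient.mk m') =
      Ideal.Quotient.mk I (polar q m m') := by
  rw [polar]
  have : (Submodule.Quotient.mk m + Submodule.Quotient.mk m' :
      M ⧸ (I • ⊤ : Submodule R M)) = Submodule.Quotient.mk (m + m') := rfl
  rw [this, resForm_mk, resForm_mk, resForm_mk, ← _root_.map_sub, ← _root_.map_sub, polar]

end ResidueForm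

section Poly
variable {R : Type*} {M : Type*} [CommRing R] [AddCommGroup M] [Module R M]

open MvPolynomial in
/-- The polynomial expressing `q` on coordinates w.r.t. a family `m`. -/
noncomputable def qfPoly (q : QuadraticForm R M) {n : ℕ} (m : Fin n → M) :
    MvPolynomial (Fin n) R :=
  (∑ i, MvPolynomial.C (q (m i)) * X i ^ 2) +
  ∑ ij ∈ Finset.univ.sym2 with ¬ ij.IsDiag,
    Sym2.lift ⟨fun i j => MvPolynomial.C (polar q (m i) (m j)) * (X i * X j),
      fun i j => by simp only []; rw [polar_comm]; ring⟩ ij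

lemma qfPoly_eval (q : QuadraticForm R M) {n : ℕ} (m : Fin n → M) (r : Fin n → R) :
    MvPolynomial.eval r (qfPoly q m) = q (∑ i, r i • m i) := by
  rw [QuadraticMap.map_sum, qfPoly, map_add, map_sum, map_sum]
  congr 1
  · refine Finset.sum_congr rfl fun i _ => ?_
    rw [QuadraticMap.map_smul, smul_eq_mul]
    simp
    ring
  · refine Finset.sum_congr rfl fun ij hij => ?_
    induction ij using Sym2.inductionOn with | hf i j =>
    simp only [Sym2.lift_mk]
    rw [Sym2.map_mk, polarSym2_sym2Mk]
    rw [polar_smul_left, polar_smul_right]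
    simp [smul_eq_mul]
    ring

end Poly

section ResidueUnit

variable {R : Type u} [CommRing R] {M : Type u} [AddCommGroup M] [Module R M]

lemma residue_nonzero_value (q : QuadraticForm R M) (hq : IsNonsingularQF q)
    (𝔪 : Ideal R) (h𝔪 : 𝔪.IsMaximal) (hFa : FaithfulSMul R M) [Module.Finite R M] :
    ∃ w : M, Ideal.Quotient.mk 𝔪 (q w) ≠ 0 := by
  letI : Field (R ⧸ 𝔪) := Ideal.Quotient.field 𝔪
  let φ : (R ⧸ 𝔪) ⊗[R] M →ₗ[R ⧸ 𝔪] (M ⧸ (𝔪 • ⊤ : Submodule R M)) :=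
    LinearMap.liftBaseChange (R ⧸ 𝔪) (Submodule.mkQ _)
  let Q : QuadraticForm (R ⧸ 𝔪) ((R ⧸ 𝔪) ⊗[R] M) := (resForm q 𝔪).comp φ
  have hφ : ∀ (t : R ⧸ 𝔪) (m : M), φ (t ⊗ₜ[R] m) = t • Submodule.Quotient.mk m := by
    intro t m; simp [φ]
  have h1 : ∀ (t : R ⧸ 𝔪) (m : M), Q (t ⊗ₜ[R] m) = t ^ 2 * algebraMap R (R ⧸ 𝔪) (q m) := by
    intro t m
    rw [QuadraticMap.comp_apply, hφ, QuadraticMap.map_smul, resForm_mk, smul_eq_mul, _root_.sq,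
      Ideal.Quotient.algebraMap_eq]
  have hpolarQ : ∀ z w, polar Q z w = polar (resForm q 𝔪) (φ z) (φ w) := by
    intro z w
    simp only [polar, Q, QuadraticMap.comp_apply, map_add]
  have h2 : ∀ (t t' : R ⧸ 𝔪) (m m' : M),
      polar Q (t ⊗ₜ[R] m) (t' ⊗ₜ[R] m') = t * t' * algebraMap R (R ⧸ 𝔪) (polar q m m') := by
    intro t t' m m'
    rw [hpolarQ, hφ, hφ, polar_smul_left, polar_smul_right, resForm_polar_mk,
      Ideal.Quotient.algebraMap_eq, smul_eq_mul, smul_eq_mul, mul_assoc]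
  have hrad := hq (R ⧸ 𝔪) Q h1 h2
  by_cases hz : ∀ z : (R ⧸ 𝔪) ⊗[R] M, Q z = 0
  · exfalso
    have hzero : ∀ z : (R ⧸ 𝔪) ⊗[R] M, z = 0 := by
      intro z
      refine hrad z (hz z) fun w => ?_
      simp [polar, hz]
    have hle : (⊤ : Submodule R M) ≤ (𝔪 • ⊤ : Submodule R M) := by
      intro m _
      have : φ ((1 : R ⧸ 𝔪) ⊗ₜ[R] m) = 0 := by rw [hzero ((1:R ⧸ 𝔪) ⊗ₜ[R] m)]; simp
      rw [hφ, one_smul] at this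
      exact (Submodule.Quotient.mk_eq_zero _).mp this
    obtain ⟨a, ha1, ha0⟩ :=
      Submodule.exists_sub_one_mem_and_smul_eq_zero_of_fg_of_le_smul 𝔪 ⊤
        (Module.Finite.fg_top) hle
    have ha : a = 0 := by
      refine hFa.eq_of_smul_eq_smul (m₂ := (0 : R)) fun x => ?_
      rw [zero_smul]; exact ha0 x trivial
    rw [ha, zero_sub, 𝔪.neg_mem_iff] at ha1
    exact (Ideal.ne_top_iff_one 𝔪).mp h𝔪.ne_top ha1
  · push_neg at hz
    obtain ⟨z, hz⟩ := hz
    obtain ⟨w, hw⟩ := Submodule.Quotient.mk_surjective _ (φ z)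
    refine ⟨w, ?_⟩
    have hQz : Q z = resForm q 𝔪 (φ z) := QuadraticMap.comp_apply _ _ _
    rw [hQz, ← hw, resForm_mk] at hz
    exact hz

end ResidueUnit

/-- Let `R` be an LG-ring and `(M, q)` a nonsingular quadratic form on
a finitely generated projective `R`-module.  Then `q` represents a unit of `R` if and
only if `M` is faithfully projective (i.e., being already finitely generated projective,
faithful). -/
theorem lg_ring_quadratic_space_represents_unit_iff_faithful
    {R : Type u} [CommRing R] (hR : IsLGRing R)
    {M : Type u} [AddCommGroup M] [Module R M]
    [Module.Finite R M] [Module.Projective R M]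
    (q : QuadraticForm R M) (hq : IsNonsingularQF q) :
    (∃ m : M, IsUnit (q m)) ↔ FaithfulSMul R M := by
  constructor
  · rintro ⟨m0, hm0⟩
    obtain ⟨k, π, σ, hπ, hσinj, hπσ⟩ := Module.Finite.exists_comp_eq_id_of_projective R M
    refine ⟨fun {m₁ m₂} h => ?_⟩
    rw [← sub_eq_zero]
    set r := m₁ - m₂ with hrdef
    have hr : ∀ a : M, r • a = 0 := fun a => by rw [sub_smul, h a, sub_self]
    let T : Ideal R := Ideal.span {x : R | ∃ (i : Fin k) (m : M), σ m i = x}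
    have hJ : T ⊔ Module.annihilator R M = ⊤ := by
      by_contra hne
      obtain ⟨𝔪, h𝔪, hle⟩ := Ideal.exists_le_maximal _ hne
      have hTm : T ≤ 𝔪 := le_trans le_sup_left hle
      have hmem : (⊤ : Submodule R M) ≤ (𝔪 • ⊤ : Submodule R M) := by
        intro m _
        have hsingle : ∀ i : Fin k,
            (Pi.single i (σ m i) : Fin k → R) = σ m i • (Pi.single i 1 : Fin k → R) := by
          intro i; ext j
          by_cases hji : j = i <;> simp [Pi.single_apply, hji]
        have hm : m = ∑ i, σ m i • π (Pi.single i 1) := by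
          have h0 : π (σ m) = m := by
            have := congrArg (fun g => g m) hπσ
            simpa using this
          conv_lhs => rw [← h0, ← Finset.univ_sum_single (σ m)]
          rw [map_sum]
          refine Finset.sum_congr rfl fun i _ => ?_
          rw [hsingle i, _root_.map_smul]
        rw [hm]
        exact Submodule.sum_mem _ fun i _ =>
          Submodule.smul_mem_smul (hTm (Ideal.subset_span ⟨i, m, rfl⟩)) trivial
      obtain ⟨a, ha1, ha0⟩ :=
        Submodule.exists_sub_one_mem_and_smul_eq_zero_of_fg_of_le_smul 𝔪 ⊤
          (Module.Finite.fg_top) hmem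
      have haan : a ∈ Module.annihilator R M :=
        Module.mem_annihilator.mpr fun x => ha0 x trivial
      have ham : a ∈ 𝔪 := hle (Submodule.mem_sup_right haan)
      have : (1 : R) ∈ 𝔪 := by simpa using 𝔪.sub_mem ham ha1
      exact (Ideal.ne_top_iff_one 𝔪).mp h𝔪.ne_top this
    obtain ⟨t, ht, a, haan, hta⟩ := Submodule.mem_sup.mp (hJ ▸ Submodule.mem_top (x := (1:R)))
    have hT0 : ∀ x ∈ T, r * x = 0 := by
      have : T ≤ LinearMap.ker (LinearMap.lsmul R R r) := by
        rw [Ideal.span_le]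
        rintro x ⟨i, m, rfl⟩
        have h0 : σ (r • m) = r • σ m := _root_.map_smul σ r m
        rw [hr m, map_zero] at h0
        have := congrFun h0 i
        simpa [LinearMap.mem_ker] using this.symm
      intro x hx
      simpa using this hx
    have haa : a * a = 0 := by
      have h0 : a • m0 = 0 := Module.mem_annihilator.mp haan m0
      have h1 : q (a • m0) = (a * a) • q m0 := QuadraticMap.map_smul q a m0
      rw [h0, QuadraticMap.map_zero, smul_eq_mul] at h1
      exact hm0.mul_right_cancel (by rw [← h1, zero_mul])
    have hra : r = r * a := by
      have : r * (t + a) = r := by rw [hta, mul_one]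
      rw [mul_add, hT0 t ht, zero_add] at this
      exact this.symm
    have hfin : r = r * (a * a) := by
      conv_lhs => rw [hra, hra]
      ring
    rw [hfin, haa, mul_zero]
  · intro hFa
    obtain ⟨n, s, hs⟩ := Module.Finite.exists_fin (R := R) (M := M)
    set m : Fin (n+1) → M := Fin.cons 0 s with hmdef
    have hm : Submodule.span R (Set.range m) = ⊤ := by
      refine top_unique ?_
      rw [← hs]
      refine Submodule.span_mono ?_
      rintro x ⟨i, rfl⟩
      exact ⟨i.succ, by simp [hmdef]⟩
    have hloc : ∀ 𝔪 : Ideal R, 𝔪.IsMaximal → ∃ v : Fin (n+1) → R ⧸ 𝔪,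
        IsUnit (MvPolynomial.eval v
          (MvPolynomial.map (Ideal.Quotient.mk 𝔪) (qfPoly q m))) := by
      intro 𝔪 h𝔪
      letI : Field (R ⧸ 𝔪) := Ideal.Quotient.field 𝔪
      obtain ⟨w, hw⟩ := residue_nonzero_value q hq 𝔪 h𝔪 hFa
      have hw' : w ∈ Submodule.span R (Set.range m) := hm ▸ Submodule.mem_top
      obtain ⟨c, hc⟩ := Submodule.mem_span_range_iff_exists_fun R |>.mp hw'
      refine ⟨fun i => Ideal.Quotient.mk 𝔪 (c i), ?_⟩
      have hevm : MvPolynomial.eval (fun i => Ideal.Quotient.mk 𝔪 (c i))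
          (MvPolynomial.map (Ideal.Quotient.mk 𝔪) (qfPoly q m)) =
          Ideal.Quotient.mk 𝔪 (MvPolynomial.eval c (qfPoly q m)) := by
        rw [MvPolynomial.eval_map]
        have := MvPolynomial.eval₂_comp_left (Ideal.Quotient.mk 𝔪) (RingHom.id R) c
          (qfPoly q m)
        rw [MvPolynomial.eval₂_id, RingHom.comp_id] at this
        exact this.symm
      rw [hevm, qfPoly_eval, hc]
      exact isUnit_iff_ne_zero.mpr hw
    obtain ⟨u, hu⟩ := hR (n+1) (by omega) (qfPoly q m) hloc
    exact ⟨∑ i, u i • m i, by rwa [← qfPoly_eval]⟩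
end
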